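/- arXiv:1010.0453 — 7 statements merged into one kernel-verified Lean document; each statement's English description precedes it below -/
import Mathlib

section
/- For the binary search tree chain started at the one-vertex tree {∅}, the probability that the tree at time n equals a given rooted binary tree t with n vertices is ∏_{u ∈ t} (#t(u))⁻¹, where #t(u) is the number of vertices v of t with u ≤ v. -/
open Finset

/-- A finite rooted binary tree: a nonempty, prefix-closed finite set of words over
`{0,1}` (encoded as `List Bool`), containing the root `[]`. -/
def IsBinTree (t : Finset (List Bool)) : Prop :=
  ([] : List Bool) ∈ t ∧ ∀ v ∈ t, ∀ u : List Bool, u <+: v → u ∈ t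

/-- `subtreeCard t u = #t(u)`, the number of vertices `v ∈ t` with `u ≤ v`
(`u` a prefix of `v`). -/
def subtreeCard (t : Finset (List Bool)) (u : List Bool) : ℕ :=
  (t.filter (fun v => u <+: v)).card

namespace BSTAux

/-- the non-root condition is omitted here; leaves of `t`. -/
def lvs (t : Finset (List Bool)) : Finset (List Bool) :=
  t.filter (fun u => ∀ v ∈ t, u <+: v → v = u)

noncomputable def r (t : Finset (List Bool)) (w : List Bool) : ℝ :=
  (subtreeCard t w : ℝ) / ((subtreeCard t w : ℝ) - 1)

noncomputable def G (t : Finset (List Bool)) (c : List Bool) : ℝ :=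
  ∑ u ∈ (lvs t).filter (fun u => c <+: u),
    ∏ w ∈ t.filter (fun w => c <+: w ∧ w <+: u ∧ w ≠ u), r t w

lemma prefix_eq_of_length_eq {x y u : List Bool} (hx : x <+: u) (hy : y <+: u)
    (h : x.length = y.length) : x = y := by
  rcases List.prefix_or_prefix_of_prefix hx hy with h1 | h1
  · exact h1.eq_of_length h
  · exact (h1.eq_of_length h.symm).symm

lemma exists_child {c w : List Bool} (hcw : c <+: w) (hne : c ≠ w) :
    ∃ b, c ++ [b] <+: w := by
  obtain ⟨s, rfl⟩ := hcw
  cases s with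
  | nil => simp at hne
  | cons b s' => exact ⟨b, ⟨s', by simp⟩⟩

lemma child_prefix {c w u : List Bool} {b : Bool} (hcb : c ++ [b] <+: u)
    (hw : w <+: u) (hcw : c <+: w) (hne : w ≠ c) : c ++ [b] <+: w := by
  rcases List.prefix_or_prefix_of_prefix hw hcb with h1 | h1
  · have hlen : (c ++ [b]).length ≤ w.length := by
      have := List.IsPrefix.length_le hcw
      have hne' : c.length ≠ w.length := fun h => hne ((hcw.eq_of_length h).symm)
      simp only [List.length_append, List.length_singleton]
      omega
    have := h1.eq_of_length (le_antisymm h1.length_le hlen)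
    exact this ▸ List.prefix_rfl
  · exact h1

lemma subCard_pos {t : Finset (List Bool)} {u : List Bool} (h : u ∈ t) :
    0 < subtreeCard t u :=
  Finset.card_pos.2 ⟨u, Finset.mem_filter.2 ⟨h, List.prefix_rfl⟩⟩

lemma subCard_nil (t : Finset (List Bool)) : subtreeCard t [] = t.card := by
  unfold subtreeCard
  rw [Finset.filter_true_of_mem (fun x _ => List.nil_prefix)]

lemma subCard_eq_zero {t : Finset (List Bool)} (ht : IsBinTree t) {c : List Bool}
    (h : c ∉ t) : subtreeCard t c = 0 := by
  unfold subtreeCard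
  rw [Finset.card_eq_zero, Finset.filter_eq_empty_iff]
  intro v hv hc
  exact h (ht.2 v hv c hc)

lemma subCard_two_le {t : Finset (List Bool)} {c w : List Bool} (hc : c ∈ t)
    (hw : w ∈ t) (hcw : c <+: w) (hne : w ≠ c) : 2 ≤ subtreeCard t c := by
  apply Finset.one_lt_card.2
  exact ⟨c, Finset.mem_filter.2 ⟨hc, List.prefix_rfl⟩,
    w, Finset.mem_filter.2 ⟨hw, hcw⟩, fun h => hne (h ▸ rfl)⟩

lemma subCard_leaf {t : Finset (List Bool)} {u : List Bool} (hu : u ∈ t)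
    (hleaf : ∀ v ∈ t, u <+: v → v = u) : subtreeCard t u = 1 := by
  unfold subtreeCard
  rw [Finset.card_eq_one]
  refine ⟨u, Finset.ext fun v => ?_⟩
  simp only [Finset.mem_filter, Finset.mem_singleton]
  exact ⟨fun ⟨hv, hp⟩ => hleaf v hv hp, fun h => by subst h; exact ⟨hu, List.prefix_rfl⟩⟩

lemma subCard_children {t : Finset (List Bool)} (c : List Bool) (hc : c ∈ t) :
    subtreeCard t c
      = 1 + subtreeCard t (c ++ [false]) + subtreeCard t (c ++ [true]) := by
  classical
  have hdisj : Disjoint (t.filter (fun v => c ++ [false] <+: v))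
      (t.filter (fun v => c ++ [true] <+: v)) := by
    rw [Finset.disjoint_left]
    rintro v h1 h2
    rw [Finset.mem_filter] at h1 h2
    obtain ⟨-, h1⟩ := h1; obtain ⟨-, h2⟩ := h2
    have := prefix_eq_of_length_eq h1 h2 (by simp)
    simp at this
  have hset : t.filter (fun v => c <+: v)
      = insert c ((t.filter (fun v => c ++ [false] <+: v))
        ∪ (t.filter (fun v => c ++ [true] <+: v))) := by
    ext v
    simp only [Finset.mem_filter, Finset.mem_insert, Finset.mem_union]
    constructor
    · rintro ⟨hv, hp⟩
      by_cases hvc : v = c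
      · exact Or.inl hvc
      · obtain ⟨b, hb⟩ := exists_child hp (fun h => hvc h.symm)
        cases b
        · exact Or.inr (Or.inl ⟨hv, hb⟩)
        · exact Or.inr (Or.inr ⟨hv, hb⟩)
    · rintro (rfl | ⟨hv, hp⟩ | ⟨hv, hp⟩)
      · exact ⟨hc, List.prefix_rfl⟩
      · exact ⟨hv, ((c.prefix_append [false]).trans hp)⟩
      · exact ⟨hv, ((c.prefix_append [true]).trans hp)⟩
  have hnotmem : c ∉ (t.filter (fun v => c ++ [false] <+: v))
      ∪ (t.filter (fun v => c ++ [true] <+: v)) := by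
    simp only [Finset.mem_union, Finset.mem_filter, not_or]
    constructor <;> rintro ⟨-, h⟩ <;>
      simpa using h.length_le
  unfold subtreeCard
  rw [hset, Finset.card_insert_of_notMem hnotmem, Finset.card_union_of_disjoint hdisj]
  omega

end BSTAux

namespace BSTAux

lemma lvs_subset (t : Finset (List Bool)) : lvs t ⊆ t := Finset.filter_subset _ _

lemma prod_path_insert {t : Finset (List Bool)} {c u : List Bool} {b : Bool}
    (hc : c ∈ t) (hcb : c ++ [b] <+: u) :
    t.filter (fun w => c <+: w ∧ w <+: u ∧ w ≠ u)
      = insert c (t.filter (fun w => c ++ [b] <+: w ∧ w <+: u ∧ w ≠ u)) := by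
  have hcu : c <+: u := (c.prefix_append [b]).trans hcb
  have hcne : c ≠ u := by
    intro h
    have := hcb.length_le
    simp [← h] at this
  ext w
  simp only [Finset.mem_filter, Finset.mem_insert]
  constructor
  · rintro ⟨hw, h1, h2, h3⟩
    by_cases hwc : w = c
    · exact Or.inl hwc
    · exact Or.inr ⟨hw, child_prefix hcb h2 h1 hwc, h2, h3⟩
  · rintro (rfl | ⟨hw, h1, h2, h3⟩)
    · exact ⟨hc, List.prefix_rfl, hcu, hcne⟩
    · exact ⟨hw, (c.prefix_append [b]).trans h1, h2, h3⟩

lemma c_notmem_path {t : Finset (List Bool)} {c u : List Bool} {b : Bool} :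
    c ∉ t.filter (fun w => c ++ [b] <+: w ∧ w <+: u ∧ w ≠ u) := by
  simp only [Finset.mem_filter, not_and]
  intro _ h
  simpa using h.length_le

lemma G_eq {t : Finset (List Bool)} (ht : IsBinTree t) :
    ∀ m : ℕ, ∀ c : List Bool, subtreeCard t c = m → G t c = m := by
  intro m
  induction m using Nat.strong_induction_on with
  | _ m ih =>
    intro c hm
    by_cases hc : c ∈ t
    · by_cases hleaf : ∀ v ∈ t, c <+: v → v = c
      · have hm1 : m = 1 := by rw [← hm]; exact subCard_leaf hc hleaf
        have hset : (lvs t).filter (fun u => c <+: u) = {c} := by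
          ext u
          simp only [Finset.mem_filter, Finset.mem_singleton]
          constructor
          · rintro ⟨hu, hcu⟩
            exact hleaf u (lvs_subset t hu) hcu
          · rintro rfl
            exact ⟨Finset.mem_filter.2 ⟨hc, hleaf⟩, List.prefix_rfl⟩
        have hempty : t.filter (fun w => c <+: w ∧ w <+: c ∧ w ≠ c) = ∅ := by
          rw [Finset.filter_eq_empty_iff]
          rintro w hw ⟨h1, h2, h3⟩
          exact h3 (h2.eq_of_length (le_antisymm h2.length_le h1.length_le))
        unfold G
        rw [hset, Finset.sum_singleton, hempty, Finset.prod_empty, hm1]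
        norm_num
      · push_neg at hleaf
        obtain ⟨v, hv, hcv, hvc⟩ := hleaf
        have h2 : 2 ≤ m := by rw [← hm]; exact subCard_two_le hc hv hcv hvc
        have hchild := subCard_children c hc
        have hfm : subtreeCard t (c ++ [false]) < m := by omega
        have htm : subtreeCard t (c ++ [true]) < m := by omega
        have Gf := ih _ hfm (c ++ [false]) rfl
        have Gt := ih _ htm (c ++ [true]) rfl
        have hdisj : Disjoint ((lvs t).filter (fun u => c ++ [false] <+: u))
            ((lvs t).filter (fun u => c ++ [true] <+: u)) := by
          rw [Finset.disjoint_left]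
          rintro u h1 h2
          rw [Finset.mem_filter] at h1 h2
          have := prefix_eq_of_length_eq h1.2 h2.2 (by simp)
          simp at this
        have hsplit : (lvs t).filter (fun u => c <+: u)
            = ((lvs t).filter (fun u => c ++ [false] <+: u))
              ∪ ((lvs t).filter (fun u => c ++ [true] <+: u)) := by
          ext u
          simp only [Finset.mem_filter, Finset.mem_union]
          constructor
          · rintro ⟨hu, hcu⟩
            have hune : c ≠ u := by
              rintro rfl
              exact hvc ((Finset.mem_filter.1 hu).2 v hv hcv)
            obtain ⟨b, hb⟩ := exists_child hcu hune
            cases b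
            · exact Or.inl ⟨hu, hb⟩
            · exact Or.inr ⟨hu, hb⟩
          · rintro (⟨hu, hb⟩ | ⟨hu, hb⟩) <;>
              exact ⟨hu, (c.prefix_append _).trans hb⟩
        have hpart : ∀ b : Bool,
            ∑ u ∈ (lvs t).filter (fun u => c ++ [b] <+: u),
              ∏ w ∈ t.filter (fun w => c <+: w ∧ w <+: u ∧ w ≠ u), r t w
            = r t c * G t (c ++ [b]) := by
          intro b
          unfold G
          rw [Finset.mul_sum]
          refine Finset.sum_congr rfl fun u hu => ?_
          have hcb : c ++ [b] <+: u := (Finset.mem_filter.1 hu).2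
          rw [prod_path_insert hc hcb, Finset.prod_insert c_notmem_path]
        have harith : ((subtreeCard t (c ++ [false]) : ℝ)
            + (subtreeCard t (c ++ [true]) : ℝ)) = (m : ℝ) - 1 := by
          have h1 : subtreeCard t (c ++ [false]) + subtreeCard t (c ++ [true]) + 1 = m := by
            omega
          rw [eq_sub_iff_add_eq]
          exact_mod_cast h1
        unfold G
        rw [hsplit, Finset.sum_union hdisj, hpart false, hpart true, ← mul_add,
          Gf, Gt, harith]
        unfold r
        rw [hm]
        have hne : (m : ℝ) - 1 ≠ 0 := by
          have : (2 : ℝ) ≤ (m : ℝ) := by exact_mod_cast h2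
          intro h; nlinarith
        field_simp
    · have hm0 : m = 0 := by rw [← hm]; exact subCard_eq_zero ht hc
      have : (lvs t).filter (fun u => c <+: u) = ∅ := by
        rw [Finset.filter_eq_empty_iff]
        intro u hu hcu
        exact hc (ht.2 u (lvs_subset t hu) c hcu)
      unfold G
      rw [this, Finset.sum_empty, hm0]
      norm_num

end BSTAux

namespace BSTAux

lemma erase_binTree {t : Finset (List Bool)} (ht : IsBinTree t) {u : List Bool}
    (hne : u ≠ []) (hleaf : ∀ v ∈ t, u <+: v → v = u) :
    IsBinTree (t.erase u) := by
  constructor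
  · exact Finset.mem_erase.2 ⟨fun h => hne h.symm, ht.1⟩
  · intro v hv p hp
    rw [Finset.mem_erase] at hv ⊢
    refine ⟨fun h => ?_, ht.2 v hv.2 p hp⟩
    subst h
    exact hv.1 (hleaf v hv.2 hp)

lemma subCard_erase_of_prefix {t : Finset (List Bool)} {u w : List Bool}
    (hu : u ∈ t) (hwu : w <+: u) :
    subtreeCard (t.erase u) w = subtreeCard t w - 1 := by
  unfold subtreeCard
  rw [Finset.filter_erase, Finset.card_erase_of_mem (Finset.mem_filter.2 ⟨hu, hwu⟩)]

lemma subCard_erase_of_not_prefix {t : Finset (List Bool)} {u w : List Bool}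
    (hwu : ¬ w <+: u) :
    subtreeCard (t.erase u) w = subtreeCard t w := by
  unfold subtreeCard
  rw [Finset.filter_erase, Finset.erase_eq_of_notMem]
  simp only [Finset.mem_filter, not_and]
  exact fun _ => hwu

lemma prod_erase_formula {t : Finset (List Bool)} {u : List Bool}
    (hu : u ∈ t) (hleaf : ∀ v ∈ t, u <+: v → v = u) :
    ∏ w ∈ t.erase u, ((subtreeCard (t.erase u) w : ℝ))⁻¹
    = (∏ w ∈ t, ((subtreeCard t w : ℝ))⁻¹)
      * ∏ w ∈ t.filter (fun w => [] <+: w ∧ w <+: u ∧ w ≠ u), r t w := by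
  classical
  have hA2 : t.filter (fun w => [] <+: w ∧ w <+: u ∧ w ≠ u)
      = t.filter (fun w => w <+: u ∧ w ≠ u) := by
    apply Finset.filter_congr
    intro w _
    simp [List.nil_prefix]
  have hA : (t.erase u).filter (fun w => w <+: u)
      = t.filter (fun w => w <+: u ∧ w ≠ u) := by
    ext w
    simp only [Finset.mem_filter, Finset.mem_erase]
    tauto
  have hC : (t.erase u).filter (fun w => ¬ w <+: u)
      = t.filter (fun w => ¬ w <+: u) := by
    ext w
    simp only [Finset.mem_filter, Finset.mem_erase]
    constructor
    · tauto
    · rintro ⟨hw, hnp⟩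
      exact ⟨⟨fun h => hnp (h ▸ List.prefix_rfl), hw⟩, hnp⟩
  rw [← Finset.prod_filter_mul_prod_filter_not (t.erase u) (fun w => w <+: u), hA, hC]
  have hL1 : ∏ w ∈ t.filter (fun w => w <+: u ∧ w ≠ u),
      ((subtreeCard (t.erase u) w : ℝ))⁻¹
      = ∏ w ∈ t.filter (fun w => w <+: u ∧ w ≠ u),
        ((subtreeCard t w : ℝ) - 1)⁻¹ := by
    refine Finset.prod_congr rfl fun w hw => ?_
    obtain ⟨hwt, hwu, hwne⟩ := Finset.mem_filter.1 hw
    have h2 : 2 ≤ subtreeCard t w := subCard_two_le hwt hu hwu (fun h => hwne h.symm)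
    rw [subCard_erase_of_prefix hu hwu]
    congr 1
    have : 1 ≤ subtreeCard t w := by omega
    push_cast [Nat.cast_sub this]
    ring
  have hL2 : ∏ w ∈ t.filter (fun w => ¬ w <+: u),
      ((subtreeCard (t.erase u) w : ℝ))⁻¹
      = ∏ w ∈ t.filter (fun w => ¬ w <+: u), ((subtreeCard t w : ℝ))⁻¹ := by
    refine Finset.prod_congr rfl fun w hw => ?_
    rw [subCard_erase_of_not_prefix (Finset.mem_filter.1 hw).2]
  rw [hL1, hL2, hA2]
  have hRHS : (∏ w ∈ t, ((subtreeCard t w : ℝ))⁻¹)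
      = (∏ w ∈ t.filter (fun w => w <+: u ∧ w ≠ u), ((subtreeCard t w : ℝ))⁻¹)
        * ∏ w ∈ t.filter (fun w => ¬ w <+: u), ((subtreeCard t w : ℝ))⁻¹ := by
    rw [← Finset.mul_prod_erase t _ hu, subCard_leaf hu hleaf]
    rw [← Finset.prod_filter_mul_prod_filter_not (t.erase u) (fun w => w <+: u), hA, hC]
    norm_num
  rw [hRHS]
  have hkey : ∏ w ∈ t.filter (fun w => w <+: u ∧ w ≠ u), ((subtreeCard t w : ℝ) - 1)⁻¹
      = (∏ w ∈ t.filter (fun w => w <+: u ∧ w ≠ u), ((subtreeCard t w : ℝ))⁻¹)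
        * ∏ w ∈ t.filter (fun w => w <+: u ∧ w ≠ u), r t w := by
    rw [← Finset.prod_mul_distrib]
    refine Finset.prod_congr rfl fun w hw => ?_
    obtain ⟨hwt, hwu, hwne⟩ := Finset.mem_filter.1 hw
    have h2 : 2 ≤ subtreeCard t w := subCard_two_le hwt hu hwu (fun h => hwne h.symm)
    have hx0 : (subtreeCard t w : ℝ) ≠ 0 := by
      have : (0:ℝ) < subtreeCard t w := by exact_mod_cast Nat.lt_of_lt_of_le two_pos h2
      exact ne_of_gt this
    unfold r
    field_simp
  rw [hkey]
  ring

end BSTAux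

/-- **Uniform marginal formula for the binary search tree chain.**
`P n t` is the probability that the BST chain started at the one-vertex tree `{[]}`
(at time 1) equals the tree `t` at time `n`.  The chain moves from a tree `s` to
`s ⊔ {u}` for a uniformly chosen external vertex `u`, i.e. with probability
`1/(#s+1)`; equivalently, backwards, `P (n+1) t` is the sum over non-root leaves `u`
of `t` of `P n (t.erase u) · 1/(#(t.erase u)+1)`.
Conclusion: for a rooted binary tree `t` with `n` vertices,
`P n t = ∏_{u ∈ t} (#t(u))⁻¹`. -/
theorem bst_time_n_distribution
    (P : ℕ → Finset (List Bool) → ℝ)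
    (hbase : ∀ t, P 1 t = if t = {([] : List Bool)} then 1 else 0)
    (hstep : ∀ n, 1 ≤ n → ∀ t : Finset (List Bool), IsBinTree t →
      P (n + 1) t
        = ∑ u ∈ t.filter (fun u => u ≠ [] ∧ ∀ v ∈ t, u <+: v → v = u),
            P n (t.erase u) * (1 / ((t.erase u).card + 1 : ℝ)))
    (n : ℕ) (hn : 1 ≤ n) (t : Finset (List Bool)) (ht : IsBinTree t)
    (hcard : t.card = n) :
    P n t = ∏ u ∈ t, ((subtreeCard t u : ℝ))⁻¹ := by
  classical
  induction n generalizing t with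
  | zero => omega
  | succ n ihn =>
    by_cases hn0 : n = 0
    · subst hn0
      obtain ⟨a, rfl⟩ := Finset.card_eq_one.1 hcard
      have ha : a = [] := by
        have := ht.1
        simp only [Finset.mem_singleton] at this
        exact this.symm
      subst ha
      rw [hbase, if_pos rfl, Finset.prod_singleton]
      have : subtreeCard {([] : List Bool)} [] = 1 := by
        rw [BSTAux.subCard_nil, Finset.card_singleton]
      rw [this]
      norm_num
    · have hn1 : 1 ≤ n := by omega
      have h2card : 2 ≤ t.card := by omega
      have hlvs_ne : ∀ u ∈ BSTAux.lvs t, u ≠ [] := by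
        intro u hu
        rintro rfl
        obtain ⟨hut, hul⟩ := Finset.mem_filter.1 hu
        obtain ⟨a, ha, b, hb, hab⟩ := Finset.one_lt_card.1 h2card
        have ha' := hul a ha (List.nil_prefix)
        have hb' := hul b hb (List.nil_prefix)
        exact hab (ha'.trans hb'.symm)
      have hFset : t.filter (fun u => u ≠ [] ∧ ∀ v ∈ t, u <+: v → v = u)
          = BSTAux.lvs t := by
        ext u
        unfold BSTAux.lvs
        simp only [Finset.mem_filter]
        constructor
        · rintro ⟨hu, -, hl⟩; exact ⟨hu, hl⟩
        · rintro ⟨hu, hl⟩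
          exact ⟨hu, hlvs_ne u (Finset.mem_filter.2 ⟨hu, hl⟩), hl⟩
      rw [hstep n hn1 t ht, hFset]
      have hterm : ∀ u ∈ BSTAux.lvs t,
          P n (t.erase u) * (1 / ((t.erase u).card + 1 : ℝ))
          = ((∏ w ∈ t, ((subtreeCard t w : ℝ))⁻¹) * (1 / ((n : ℝ) + 1)))
            * ∏ w ∈ t.filter (fun w => [] <+: w ∧ w <+: u ∧ w ≠ u), BSTAux.r t w := by
        intro u hu
        obtain ⟨hut, hul⟩ := Finset.mem_filter.1 hu
        have hune : u ≠ [] := hlvs_ne u hu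
        have hbt : IsBinTree (t.erase u) := BSTAux.erase_binTree ht hune hul
        have hcu : (t.erase u).card = n := by
          rw [Finset.card_erase_of_mem hut]; omega
        rw [ihn hn1 _ hbt hcu, hcu, BSTAux.prod_erase_formula hut hul]
        ring
      rw [Finset.sum_congr rfl hterm, ← Finset.mul_sum]
      have hG : ∑ u ∈ BSTAux.lvs t,
          ∏ w ∈ t.filter (fun w => [] <+: w ∧ w <+: u ∧ w ≠ u), BSTAux.r t w
          = BSTAux.G t [] := by
        unfold BSTAux.G
        congr 1
        rw [Finset.filter_true_of_mem (fun x _ => List.nil_prefix)]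
      rw [hG, BSTAux.G_eq ht t.card [] (BSTAux.subCard_nil t), hcard]
      have hne : ((n : ℝ) + 1) ≠ 0 := by positivity
      push_cast
      field_simp
end

section
/- For the BST chain and rooted binary trees s ⊆ t, the probability that the chain started at s ever equals t is C(#t, #s)⁻¹ · ∏_{v ∈ t∖s} (#t(v))⁻¹. -/
open Finset

/-- The external vertices of a finite rooted binary tree `s`: words not in `s` whose
parent belongs to `s`. -/
def extVerts (s : Finset (List Bool)) : Finset (List Bool) :=
  (s.image (fun u => u ++ [true]) ∪ s.image (fun u => u ++ [false])) \ s


lemma extVerts_eq_concat {s : Finset (List Bool)} {u : List Bool} (hu : u ∈ extVerts s) :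
    ∃ p ∈ s, ∃ b : Bool, u = p ++ [b] := by
  rw [extVerts, mem_sdiff, mem_union] at hu
  rcases hu.1 with h | h <;> rcases mem_image.1 h with ⟨p, hp, rfl⟩
  · exact ⟨p, hp, true, rfl⟩
  · exact ⟨p, hp, false, rfl⟩

lemma extVerts_not_mem {s : Finset (List Bool)} {u : List Bool} (hu : u ∈ extVerts s) :
    u ∉ s := (mem_sdiff.1 hu).2

lemma insert_bintree {s : Finset (List Bool)} {u : List Bool} (hs : IsBinTree s)
    (hu : u ∈ extVerts s) : IsBinTree (insert u s) := by
  obtain ⟨p, hp, b, rfl⟩ := extVerts_eq_concat hu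
  refine ⟨mem_insert_of_mem hs.1, ?_⟩
  intro v hv w hw
  rcases mem_insert.1 hv with rfl | hv
  · rcases List.prefix_concat_iff.1 hw with rfl | hw
    · exact mem_insert_self _ _
    · exact mem_insert_of_mem (hs.2 p hp w hw)
  · exact mem_insert_of_mem (hs.2 v hv w hw)

section stem
variable {s : Finset (List Bool)}

noncomputable def stem (s : Finset (List Bool)) (v : List Bool) : List Bool :=
  letI := Classical.dec (∃ n, v.take n ∉ s)
  if h : ∃ n, v.take n ∉ s then v.take (Nat.find h) else []

lemma stem_eq (s : Finset (List Bool)) (v : List Bool) (h : ∃ n, v.take n ∉ s) :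
    letI := Classical.dec (∃ n, v.take n ∉ s)
    stem s v = v.take (Nat.find h) := by
  rw [stem]; exact dif_pos h

lemma stem_spec (hs : IsBinTree s) {v : List Bool} (hv : v ∉ s) :
    stem s v ∈ extVerts s ∧ stem s v <+: v := by
  have hex : ∃ n, v.take n ∉ s := ⟨v.length, by simpa using hv⟩
  letI := Classical.dec (∃ n, v.take n ∉ s)
  have hst : stem s v = v.take (Nat.find hex) := stem_eq s v hex
  have hNs : v.take (Nat.find hex) ∉ s := Nat.find_spec hex
  have hNle : Nat.find hex ≤ v.length := Nat.find_le (by simpa using hv)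
  have hNpos : 0 < Nat.find hex := by
    rcases Nat.eq_zero_or_pos (Nat.find hex) with h0 | h0
    · exfalso; apply hNs; rw [h0]; simpa using hs.1
    · exact h0
  obtain ⟨m, hNm⟩ : ∃ m, Nat.find hex = m + 1 := ⟨Nat.find hex - 1, by omega⟩
  rw [hNm] at hst hNs
  have hm : v.take m ∈ s := by
    by_contra hmem
    exact absurd (Nat.find_min hex (by omega : m < Nat.find hex)) (by simpa using hmem)
  have hmlt : m < v.length := by omega
  have htake : v.take (m + 1) = v.take m ++ [v[m]] := by
    rw [List.take_succ, List.getElem?_eq_getElem hmlt]; rfl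
  constructor
  · rw [hst, extVerts, mem_sdiff, mem_union]
    refine ⟨?_, hNs⟩
    cases hb : v[m] with
    | true => left; exact mem_image.2 ⟨v.take m, hm, by rw [← hb, ← htake]⟩
    | false => right; exact mem_image.2 ⟨v.take m, hm, by rw [← hb, ← htake]⟩
  · rw [hst]; exact List.take_prefix _ _

lemma stem_unique (hs : IsBinTree s) {v u : List Bool} (hu : u ∈ extVerts s)
    (hpre : u <+: v) : stem s v = u := by
  have hus : u ∉ s := extVerts_not_mem hu
  have hv : v ∉ s := fun hv => hus (hs.2 v hv u hpre)
  obtain ⟨p, hp, b, hub⟩ := extVerts_eq_concat hu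
  have hex : ∃ n, v.take n ∉ s := ⟨v.length, by simpa using hv⟩
  letI := Classical.dec (∃ n, v.take n ∉ s)
  have hst : stem s v = v.take (Nat.find hex) := stem_eq s v hex
  have hNs : v.take (Nat.find hex) ∉ s := Nat.find_spec hex
  have hueq : u = v.take u.length := List.prefix_iff_eq_take.1 hpre
  have hNle : Nat.find hex ≤ u.length := Nat.find_le (by rw [← hueq]; exact hus)
  have hlen : u.length = p.length + 1 := by rw [hub]; simp
  have hplen : v.take p.length = p := by
    have : v.take p.length = (v.take u.length).take p.length := by
      rw [List.take_take]; congr 1; omega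
    rw [this, ← hueq, hub, List.take_left]
  have hgeN : u.length ≤ Nat.find hex := by
    by_contra hlt
    push_neg at hlt
    have h1 : v.take (Nat.find hex) <+: v.take p.length :=
      List.take_prefix_take_left (by omega)
    rw [hplen] at h1
    exact hNs (hs.2 p hp _ h1)
  have heq : Nat.find hex = u.length := le_antisymm hNle hgeN
  rw [hst, heq, ← hueq]

end stem

lemma sum_subtree {s t : Finset (List Bool)} (hs : IsBinTree s) (ht : IsBinTree t)
    (hst : s ⊆ t) :
    ∑ u ∈ extVerts s ∩ t, (subtreeCard t u : ℝ) = ((t \ s).card : ℝ) := by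
  have h1 : (t \ s).card = ∑ u ∈ extVerts s ∩ t,
      ((t \ s).filter (fun v => stem s v = u)).card := by
    apply Finset.card_eq_sum_card_fiberwise
    intro v hv
    rw [Finset.mem_coe, mem_sdiff] at hv
    obtain ⟨hext, hpre⟩ := stem_spec hs hv.2
    exact mem_inter.2 ⟨hext, ht.2 v hv.1 _ hpre⟩
  have h2 : ∀ u ∈ extVerts s ∩ t,
      (t \ s).filter (fun v => stem s v = u) = t.filter (fun v => u <+: v) := by
    intro u hu
    have hu' := (mem_inter.1 hu).1
    ext v
    simp only [mem_filter, mem_sdiff]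
    constructor
    · rintro ⟨⟨hvt, hvs⟩, hf⟩
      exact ⟨hvt, hf ▸ (stem_spec hs hvs).2⟩
    · rintro ⟨hvt, hpre⟩
      have hvs : v ∉ s := fun hv => extVerts_not_mem hu' (hs.2 v hv u hpre)
      exact ⟨⟨hvt, hvs⟩, stem_unique hs hu' hpre⟩
  rw [h1]
  push_cast
  apply Finset.sum_congr rfl
  intro u hu
  rw [subtreeCard, h2 u hu]

/-- **Hitting probabilities of the binary search tree chain.**
`hit s t` is the probability that the BST chain started at the rooted binary tree `s`
ever equals `t`.  The BST chain moves from `s` to `insert u s` for a uniformly chosen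
external vertex `u` of `s` (probability `1/(#s+1)` each).  Conclusion: for rooted
binary trees `s ⊆ t`,
`hit s t = C(#t, #s)⁻¹ · ∏_{v ∈ t∖s} (#t(v))⁻¹`. -/
theorem bst_hitting_probability
    (hit : Finset (List Bool) → Finset (List Bool) → ℝ)
    (hself : ∀ t, hit t t = 1)
    (hzero : ∀ s t, ¬ s ⊆ t → hit s t = 0)
    (hrec : ∀ s t : Finset (List Bool), IsBinTree s → s ≠ t →
      hit s t = ∑ u ∈ extVerts s, (1 / (s.card + 1 : ℝ)) * hit (insert u s) t)
    (s t : Finset (List Bool)) (hs : IsBinTree s) (ht : IsBinTree t) (hst : s ⊆ t) :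
    hit s t = ((t.card.choose s.card : ℝ))⁻¹ * ∏ v ∈ t \ s, ((subtreeCard t v : ℝ))⁻¹ := by
  classical
  obtain ⟨n, hn⟩ : ∃ n, (t \ s).card = n := ⟨_, rfl⟩
  induction n generalizing s with
  | zero =>
    have hts : s = t := Finset.Subset.antisymm hst (by
      intro v hv
      by_contra hvs
      have : v ∈ t \ s := mem_sdiff.2 ⟨hv, hvs⟩
      rw [Finset.card_eq_zero] at hn
      simp [hn] at this)
    subst hts
    simp [hself]
  | succ n ih =>
    have hne : s ≠ t := by
      rintro rfl
      simp at hn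
    have hk : s.card < t.card := Finset.card_lt_card (lt_of_le_of_ne hst hne)
    set k := s.card with hkdef
    set N := t.card with hNdef
    -- rewrite the sum over extVerts s as a sum over extVerts s ∩ t
    have hsum0 : ∑ u ∈ extVerts s, (1 / (k + 1 : ℝ)) * hit (insert u s) t
        = ∑ u ∈ extVerts s ∩ t, (1 / (k + 1 : ℝ)) * hit (insert u s) t := by
      apply (Finset.sum_subset Finset.inter_subset_left ?_).symm
      intro u hu hunot
      have hut : u ∉ t := fun h => hunot (mem_inter.2 ⟨hu, h⟩)
      rw [hzero _ _ (fun h => hut (h (mem_insert_self u s))), mul_zero]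
    -- evaluate each term via the induction hypothesis
    have hterm : ∀ u ∈ extVerts s ∩ t,
        hit (insert u s) t = ((N.choose (k + 1) : ℝ))⁻¹ *
          ((subtreeCard t u : ℝ) * ∏ v ∈ t \ s, ((subtreeCard t v : ℝ))⁻¹) := by
      intro u hu
      obtain ⟨hue, hut⟩ := mem_inter.1 hu
      have hus : u ∉ s := extVerts_not_mem hue
      have huts : u ∈ t \ s := mem_sdiff.2 ⟨hut, hus⟩
      have hsub : insert u s ⊆ t := Finset.insert_subset hut hst
      have hsd : t \ insert u s = (t \ s).erase u := by
        ext v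
        simp only [mem_sdiff, mem_erase, mem_insert]
        tauto
      have hcard : (t \ insert u s).card = n := by
        rw [hsd, Finset.card_erase_of_mem huts, hn]; omega
      have hic : (insert u s).card = k + 1 := Finset.card_insert_of_notMem hus
      have := ih (insert u s) (insert_bintree hs hue) hsub hcard
      rw [this, hic, hsd]
      congr 1
      have hu1 : (subtreeCard t u : ℝ) ≠ 0 := by
        have : 0 < subtreeCard t u :=
          Finset.card_pos.2 ⟨u, mem_filter.2 ⟨hut, List.prefix_refl u⟩⟩
        positivity
      rw [← Finset.mul_prod_erase (t \ s) (fun v => ((subtreeCard t v : ℝ))⁻¹) huts,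
        ← mul_assoc, mul_inv_cancel₀ hu1, one_mul]
    have hA : ∑ u ∈ extVerts s ∩ t, (1 / (k + 1 : ℝ)) * (((N.choose (k + 1) : ℝ))⁻¹ *
          ((subtreeCard t u : ℝ) * ∏ v ∈ t \ s, ((subtreeCard t v : ℝ))⁻¹))
        = (∑ u ∈ extVerts s ∩ t, (subtreeCard t u : ℝ)) *
          ((1 / (k + 1 : ℝ)) * ((N.choose (k + 1) : ℝ))⁻¹ *
            ∏ v ∈ t \ s, ((subtreeCard t v : ℝ))⁻¹) := by
      rw [Finset.sum_mul]
      exact Finset.sum_congr rfl (fun u _ => by ring)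
    rw [hrec s t hs hne, ← hkdef, hsum0, Finset.sum_congr rfl
      (fun u hu => by rw [hterm u hu]), hA, sum_subtree hs ht hst, hn]
    have hcast : ((N.choose (k+1) : ℝ)) * (k+1) = (N.choose k : ℝ) * ((N - k : ℕ) : ℝ) := by
      exact_mod_cast congrArg (Nat.cast : ℕ → ℝ) (Nat.choose_succ_right_eq N k)
    have hNk : N - k = n + 1 := by rw [← hn, ← Finset.card_sdiff_of_subset hst]
    rw [hNk] at hcast
    have h1 : (N.choose k : ℝ) ≠ 0 := by
      have := Nat.choose_pos (le_of_lt hk); positivity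
    have h2 : (N.choose (k+1) : ℝ) ≠ 0 := by
      have := Nat.choose_pos hk; positivity
    have h3 : ((k : ℝ) + 1) ≠ 0 := by positivity
    have hscal : ((n + 1 : ℕ) : ℝ) * ((1 / (k + 1 : ℝ)) * ((N.choose (k + 1) : ℝ))⁻¹)
        = ((N.choose k : ℝ))⁻¹ := by
      field_simp
      push_cast at hcast ⊢
      nlinarith [hcast]
    rw [← hscal]
    ring
end

section
/- The Martin kernel of the BST chain with reference state {∅} satisfies, for rooted binary trees s ⊆ t, K(s,t) = C(#t, #s)⁻¹ · ∏_{u ∈ s} #t(u), and K(s,t) = 0 if s ⊄ t. -/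
open Finset

lemma mem_extVerts {s : Finset (List Bool)} {u : List Bool} :
    u ∈ extVerts s ↔ (∃ w ∈ s, ∃ b : Bool, w ++ [b] = u) ∧ u ∉ s := by
  simp only [extVerts, mem_sdiff, mem_union, mem_image]
  constructor
  · rintro ⟨(⟨w, hw, rfl⟩ | ⟨w, hw, rfl⟩), hu⟩
    · exact ⟨⟨w, hw, true, rfl⟩, hu⟩
    · exact ⟨⟨w, hw, false, rfl⟩, hu⟩
  · rintro ⟨⟨w, hw, b, rfl⟩, hu⟩
    cases b
    · exact ⟨Or.inr ⟨w, hw, rfl⟩, hu⟩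
    · exact ⟨Or.inl ⟨w, hw, rfl⟩, hu⟩

lemma isBinTree_insert {s : Finset (List Bool)} (hs : IsBinTree s) {u : List Bool}
    (hu : u ∈ extVerts s) : IsBinTree (insert u s) := by
  obtain ⟨⟨w, hw, b, rfl⟩, hus⟩ := mem_extVerts.1 hu
  refine ⟨mem_insert_of_mem hs.1, ?_⟩
  intro v hv p hp
  rcases mem_insert.1 hv with rfl | hv
  · rcases List.prefix_concat_iff.1 hp with rfl | hp
    · exact mem_insert_self _ _
    · exact mem_insert_of_mem (hs.2 w hw p hp)
  · exact mem_insert_of_mem (hs.2 v hv p hp)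

lemma extVerts_antichain {s : Finset (List Bool)} (hs : IsBinTree s) {u u' : List Bool}
    (hu : u ∈ extVerts s) (hu' : u' ∈ extVerts s) (h : u <+: u') : u = u' := by
  obtain ⟨⟨w, hw, b, rfl⟩, hus⟩ := mem_extVerts.1 hu'
  rcases List.prefix_concat_iff.1 h with rfl | hp
  · rfl
  · exact absurd (hs.2 w hw u hp) (mem_extVerts.1 hu).2

lemma exists_ext_prefix {s t : Finset (List Bool)} (hs : IsBinTree s) (ht : IsBinTree t) :
    ∀ v ∈ t, v ∉ s → ∃ u ∈ extVerts s, u <+: v := by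
  intro v
  induction v using List.reverseRecOn with
  | nil => intro _ hv; exact absurd hs.1 hv
  | append_singleton w b ih =>
    intro hv hvs
    by_cases hw : w ∈ s
    · exact ⟨w ++ [b], mem_extVerts.2 ⟨⟨w, hw, b, rfl⟩, hvs⟩, List.prefix_refl _⟩
    · obtain ⟨u, hu, hp⟩ := ih (ht.2 _ hv _ (List.prefix_append _ _)) hw
      exact ⟨u, hu, hp.trans (List.prefix_append _ _)⟩

lemma sdiff_eq_biUnion {s t : Finset (List Bool)} (hs : IsBinTree s) (ht : IsBinTree t)
    (hst : s ⊆ t) :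
    t \ s = (extVerts s ∩ t).biUnion (fun u => t.filter (fun v => u <+: v)) := by
  ext v
  simp only [mem_sdiff, mem_biUnion, mem_inter, mem_filter]
  constructor
  · rintro ⟨hvt, hvs⟩
    obtain ⟨u, hu, hp⟩ := exists_ext_prefix hs ht v hvt hvs
    exact ⟨u, ⟨hu, ht.2 v hvt u hp⟩, hvt, hp⟩
  · rintro ⟨u, ⟨hu, -⟩, hvt, hp⟩
    exact ⟨hvt, fun hvs => (mem_extVerts.1 hu).2 (hs.2 v hvs u hp)⟩

lemma card_sdiff_eq_sum {s t : Finset (List Bool)} (hs : IsBinTree s) (ht : IsBinTree t)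
    (hst : s ⊆ t) :
    (t \ s).card = ∑ u ∈ extVerts s ∩ t, subtreeCard t u := by
  rw [sdiff_eq_biUnion hs ht hst, card_biUnion]
  · rfl
  · intro u hu u' hu' hne
    simp only [disjoint_left, mem_filter]
    rintro v ⟨hvt, hp⟩ ⟨-, hp'⟩
    rcases List.prefix_or_prefix_of_prefix hp hp' with h | h
    · exact hne (extVerts_antichain hs (mem_inter.1 hu).1 (mem_inter.1 hu').1 h)
    · exact hne (extVerts_antichain hs (mem_inter.1 hu').1 (mem_inter.1 hu).1 h).symm

lemma subtreeCard_pos {t : Finset (List Bool)} {v : List Bool} (hv : v ∈ t) :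
    0 < subtreeCard t v :=
  card_pos.2 ⟨v, mem_filter.2 ⟨hv, List.prefix_refl _⟩⟩

lemma hit_formula
    (hit : Finset (List Bool) → Finset (List Bool) → ℝ)
    (hself : ∀ t, hit t t = 1)
    (hzero : ∀ s t, ¬ s ⊆ t → hit s t = 0)
    (hrec : ∀ s t : Finset (List Bool), IsBinTree s → s ≠ t →
      hit s t = ∑ u ∈ extVerts s, (1 / (s.card + 1 : ℝ)) * hit (insert u s) t) :
    ∀ n (s t : Finset (List Bool)), IsBinTree s → IsBinTree t → s ⊆ t → (t \ s).card = n →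
      hit s t = ((t.card.choose s.card : ℝ))⁻¹ * ∏ v ∈ t \ s, ((subtreeCard t v : ℝ))⁻¹ := by
  intro n
  induction n using Nat.strong_induction_on with
  | _ n ih =>
  intro s t hs ht hst hcard
  by_cases hEq : s = t
  · subst hEq; simp [hself]
  · have hne : (t \ s).Nonempty := by
      rw [Finset.sdiff_nonempty]
      exact fun h => hEq (subset_antisymm hst h)
    have hklt : s.card < t.card := card_lt_card (ssubset_of_subset_of_ne hst hEq)
    rw [hrec s t hs hEq]
    rw [← Finset.sum_subset (inter_subset_left : extVerts s ∩ t ⊆ extVerts s)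
      (fun u hu hu' => ?_)]
    · -- sum over extVerts s ∩ t
      have hterm : ∀ u ∈ extVerts s ∩ t,
          (1 / (s.card + 1 : ℝ)) * hit (insert u s) t
            = (1 / (s.card + 1 : ℝ)) * ((t.card.choose (s.card + 1) : ℝ))⁻¹
              * ((∏ v ∈ t \ s, ((subtreeCard t v : ℝ))⁻¹) * (subtreeCard t u : ℝ)) := by
        intro u hu
        obtain ⟨hue, hut⟩ := mem_inter.1 hu
        have hus : u ∉ s := (mem_extVerts.1 hue).2
        have humem : u ∈ t \ s := mem_sdiff.2 ⟨hut, hus⟩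
        have hcard' : (t \ insert u s).card = n - 1 := by
          rw [Finset.sdiff_insert, card_erase_of_mem humem, hcard]
        have hnpos : 0 < n := hcard ▸ card_pos.2 hne
        have hrec' := ih (n - 1) (Nat.sub_lt hnpos one_pos) (insert u s) t
          (isBinTree_insert hs hue) ht (insert_subset hut hst) hcard'
        rw [hrec', card_insert_of_notMem hus]
        have hprod : ∏ v ∈ t \ insert u s, ((subtreeCard t v : ℝ))⁻¹
            = (∏ v ∈ t \ s, ((subtreeCard t v : ℝ))⁻¹) * (subtreeCard t u : ℝ) := by
          have h0 : ((subtreeCard t u : ℝ)) ≠ 0 :=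
            Nat.cast_ne_zero.2 (subtreeCard_pos hut).ne'
          have hh : ((subtreeCard t u : ℝ))⁻¹ * ∏ x ∈ (t \ s).erase u, ((subtreeCard t x : ℝ))⁻¹
              = ∏ x ∈ t \ s, ((subtreeCard t x : ℝ))⁻¹ :=
            Finset.mul_prod_erase (t \ s) (fun v => ((subtreeCard t v : ℝ))⁻¹) humem
          rw [Finset.sdiff_insert, ← hh, mul_comm, ← mul_assoc, mul_inv_cancel₀ h0, one_mul]
        rw [hprod]; ring
      rw [Finset.sum_congr rfl hterm]
      have hsum : ∑ u ∈ extVerts s ∩ t, (subtreeCard t u : ℝ) = ((t.card - s.card : ℕ) : ℝ) := by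
        rw [← card_sdiff_of_subset hst, card_sdiff_eq_sum hs ht hst]; push_cast; ring
      have hstep : ∑ x ∈ extVerts s ∩ t, (1 / (s.card + 1 : ℝ))
            * ((t.card.choose (s.card + 1) : ℝ))⁻¹
            * ((∏ v ∈ t \ s, ((subtreeCard t v : ℝ))⁻¹) * (subtreeCard t x : ℝ))
          = (1 / (s.card + 1 : ℝ)) * ((t.card.choose (s.card + 1) : ℝ))⁻¹
            * (∏ v ∈ t \ s, ((subtreeCard t v : ℝ))⁻¹)
            * ∑ x ∈ extVerts s ∩ t, (subtreeCard t x : ℝ) := by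
        rw [Finset.mul_sum]
        exact Finset.sum_congr rfl fun x _ => by ring
      rw [hstep, hsum]
      have hcoef : (1 / (s.card + 1 : ℝ)) * ((t.card.choose (s.card + 1) : ℝ))⁻¹
          * ((t.card - s.card : ℕ) : ℝ) = ((t.card.choose s.card : ℝ))⁻¹ := by
        have key : ((t.card.choose (s.card + 1) : ℝ)) * ((s.card : ℝ) + 1)
            = (t.card.choose s.card : ℝ) * ((t.card - s.card : ℕ) : ℝ) := by
          exact_mod_cast Nat.choose_succ_right_eq t.card s.card
        have h1 : ((t.card.choose s.card : ℝ)) ≠ 0 :=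
          Nat.cast_ne_zero.2 (Nat.choose_pos hklt.le).ne'
        have h2 : ((t.card.choose (s.card + 1) : ℝ)) ≠ 0 :=
          Nat.cast_ne_zero.2 (Nat.choose_pos hklt).ne'
        have h3 : ((s.card : ℝ) + 1) ≠ 0 := by positivity
        field_simp
        linarith [key]
      calc (1 / (s.card + 1 : ℝ)) * ((t.card.choose (s.card + 1) : ℝ))⁻¹
            * (∏ v ∈ t \ s, ((subtreeCard t v : ℝ))⁻¹) * ((t.card - s.card : ℕ) : ℝ)
          = ((1 / (s.card + 1 : ℝ)) * ((t.card.choose (s.card + 1) : ℝ))⁻¹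
              * ((t.card - s.card : ℕ) : ℝ)) * (∏ v ∈ t \ s, ((subtreeCard t v : ℝ))⁻¹) := by
            ring
        _ = ((t.card.choose s.card : ℝ))⁻¹ * ∏ v ∈ t \ s, ((subtreeCard t v : ℝ))⁻¹ := by
            rw [hcoef]
    · -- vanishing outside t
      have hut : u ∉ t := fun h => hu' (mem_inter.2 ⟨hu, h⟩)
      have : ¬ insert u s ⊆ t := fun h => hut (h (mem_insert_self _ _))
      rw [hzero _ _ this, mul_zero]

/-- **Martin kernel of the binary search tree chain** with reference state `{[]}`:
`K(s,t) = hit s t / hit {[]} t`, where `hit` is the hitting probability of the BST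
chain (which moves from a tree `s` to `insert u s` for a uniformly chosen external
vertex `u`).  For rooted binary trees `s ⊆ t`,
`K(s,t) = C(#t, #s)⁻¹ · ∏_{u ∈ s} #t(u)`, and `K(s,t) = 0` if `s ⊄ t`. -/
theorem bst_martin_kernel
    (hit : Finset (List Bool) → Finset (List Bool) → ℝ)
    (hself : ∀ t, hit t t = 1)
    (hzero : ∀ s t, ¬ s ⊆ t → hit s t = 0)
    (hrec : ∀ s t : Finset (List Bool), IsBinTree s → s ≠ t →
      hit s t = ∑ u ∈ extVerts s, (1 / (s.card + 1 : ℝ)) * hit (insert u s) t)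
    (s t : Finset (List Bool)) (hs : IsBinTree s) (ht : IsBinTree t) :
    (s ⊆ t →
      hit s t / hit {([] : List Bool)} t
        = ((t.card.choose s.card : ℝ))⁻¹ * ∏ u ∈ s, (subtreeCard t u : ℝ))
    ∧ (¬ s ⊆ t → hit s t / hit {([] : List Bool)} t = 0) := by
  constructor
  · intro hst
    have hroot : IsBinTree {([] : List Bool)} := by
      refine ⟨mem_singleton_self _, ?_⟩
      intro v hv u hu
      rw [mem_singleton] at hv ⊢
      subst hv
      exact List.prefix_nil.mp hu
    have hroot_sub : {([] : List Bool)} ⊆ t := singleton_subset_iff.2 ht.1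
    have hn : 0 < t.card := card_pos.2 ⟨[], ht.1⟩
    have hn0 : ((t.card : ℝ)) ≠ 0 := Nat.cast_ne_zero.2 hn.ne'
    have h1 := hit_formula hit hself hzero hrec _ s t hs ht hst rfl
    have h2 := hit_formula hit hself hzero hrec _ {([] : List Bool)} t hroot ht hroot_sub rfl
    rw [card_singleton, Nat.choose_one_right] at h2
    set P : ℝ := ∏ v ∈ t \ s, ((subtreeCard t v : ℝ))⁻¹ with hP
    set P₂ : ℝ := ∏ v ∈ t \ {([] : List Bool)}, ((subtreeCard t v : ℝ))⁻¹ with hP₂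
    set Q : ℝ := ∏ u ∈ s, (subtreeCard t u : ℝ) with hQ
    have hQ0 : Q ≠ 0 :=
      Finset.prod_ne_zero_iff.2 fun u hu => Nat.cast_ne_zero.2 (subtreeCard_pos (hst hu)).ne'
    have hP0 : P ≠ 0 := Finset.prod_ne_zero_iff.2 fun v hv =>
      inv_ne_zero (Nat.cast_ne_zero.2 (subtreeCard_pos (mem_sdiff.1 hv).1).ne')
    have hroot_card : subtreeCard t [] = t.card := by
      unfold subtreeCard
      rw [filter_true_of_mem fun v _ => List.nil_prefix]
    have hT1 : P * Q⁻¹ = ∏ v ∈ t, ((subtreeCard t v : ℝ))⁻¹ := by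
      rw [hQ, ← Finset.prod_inv_distrib]
      exact Finset.prod_sdiff hst
    have hT2 : P₂ * ((t.card : ℝ))⁻¹ = ∏ v ∈ t, ((subtreeCard t v : ℝ))⁻¹ := by
      have := Finset.prod_sdiff (f := fun v => ((subtreeCard t v : ℝ))⁻¹) hroot_sub
      rw [Finset.prod_singleton, hroot_card] at this
      exact this
    have hP2eq : P₂ = (t.card : ℝ) * P * Q⁻¹ := by
      have h := hT2.trans hT1.symm
      field_simp at h ⊢
      linarith [h]
    rw [h1, h2, hP2eq]
    have hC : ((t.card.choose s.card : ℝ)) ≠ 0 :=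
      Nat.cast_ne_zero.2 (Nat.choose_pos (card_le_card hst)).ne'
    field_simp
  · intro hst
    rw [hzero s t hst, zero_div]
end

section
/- The digital search tree process is the Doob h-transform of the binary search tree process with respect to the harmonic function h(s) = (#s)! ∏_{u∈s} 2^{-|u|}: that is, for trees t = s ⊔ {u} with u external in s, h(s)⁻¹ · (1/(#s+1)) · h(t) = 2^{-|u|}, where |u| is the length of the word u. -/
open Finset

/-- **The DST process is the Doob h-transform of the BST process** with respect to the
harmonic function `h(s) = (#s)! ∏_{u∈s} 2^{-|u|}` (fair coin-tossing measure): for a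
rooted binary tree `s` and an external vertex `u` of `s` (so `t = s ⊔ {u}`),
`h(s)⁻¹ · (1/(#s+1)) · h(t) = 2^{-|u|}`, the DST transition probability,
where `|u|` is the length of the word `u`. -/
theorem dst_is_h_transform_of_bst
    (h : Finset (List Bool) → ℝ)
    (hdef : ∀ s : Finset (List Bool),
      h s = (s.card.factorial : ℝ) * ∏ v ∈ s, (2 : ℝ) ^ (-(v.length : ℤ)))
    (s : Finset (List Bool)) (hs : IsBinTree s) (u : List Bool) (hu : u ∈ extVerts s) :
    (h s)⁻¹ * (1 / (s.card + 1 : ℝ)) * h (insert u s) = (2 : ℝ) ^ (-(u.length : ℤ)) := by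
  have hus : u ∉ s := (Finset.mem_sdiff.mp hu).2
  have hcard : (insert u s).card = s.card + 1 := Finset.card_insert_of_notMem hus
  have hprod : ∏ v ∈ insert u s, (2 : ℝ) ^ (-(v.length : ℤ)) =
      (2 : ℝ) ^ (-(u.length : ℤ)) * ∏ v ∈ s, (2 : ℝ) ^ (-(v.length : ℤ)) :=
    Finset.prod_insert hus
  have hPpos : (0 : ℝ) < ∏ v ∈ s, (2 : ℝ) ^ (-(v.length : ℤ)) :=
    Finset.prod_pos fun v _ => zpow_pos (by norm_num) _
  have hfpos : (0 : ℝ) < (s.card.factorial : ℝ) := by positivity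
  rw [hdef, hdef, hcard, hprod, Nat.factorial_succ]
  push_cast
  field_simp
end

section
/- For the Mallows urn chain with parameter p, the Martin kernel with reference state (0,0) is K((i,j),(k,ℓ)) = (1−p)^{-i} if i ≤ k and j = 0; K((i,j),(k,ℓ)) = (1−p)^{-i} p^{-1} if i = k and 1 ≤ j ≤ ℓ; and K((i,j),(k,ℓ)) = 0 otherwise. -/
/-- **Martin kernel of the Mallows urn** with reference state `(0,0)`.
With `hit` the hitting probability of the Mallows urn
(transitions `(i,0) → (i+1,0)` w.p. `1−p`, `(i,0) → (i,1)` w.p. `p`,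
`(i,j) → (i,j+1)` w.p. `1` for `j ≥ 1`), the Martin kernel
`K((i,j),(k,ℓ)) = hit (i,j) (k,ℓ) / hit (0,0) (k,ℓ)` equals `(1−p)^{-i}` if
`i ≤ k` and `j = 0`; equals `(1−p)^{-i} p⁻¹` if `i = k` and `1 ≤ j ≤ ℓ`; and
equals `0` otherwise. -/
theorem mallows_urn_martin_kernel
    (p : ℝ) (hp0 : 0 < p) (hp1 : p < 1)
    (hit : ℕ × ℕ → ℕ × ℕ → ℝ)
    (hbdd : ∀ x y, 0 ≤ hit x y ∧ hit x y ≤ 1)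
    (hself : ∀ x, hit x x = 1)
    (hzero : ∀ x y, ¬(x.1 ≤ y.1 ∧ x.2 ≤ y.2) → hit x y = 0)
    (hrec0 : ∀ i : ℕ, ∀ y : ℕ × ℕ, (i, 0) ≠ y →
      hit (i, 0) y = (1 - p) * hit (i + 1, 0) y + p * hit (i, 1) y)
    (hrecj : ∀ i j : ℕ, ∀ y : ℕ × ℕ, (i, j + 1) ≠ y →
      hit (i, j + 1) y = hit (i, j + 2) y)
    (i j k l : ℕ) :
    (i ≤ k ∧ j = 0 →
      hit (i, j) (k, l) / hit (0, 0) (k, l) = (1 - p) ^ (-(i : ℤ)))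
    ∧ (i = k ∧ 1 ≤ j ∧ j ≤ l →
      hit (i, j) (k, l) / hit (0, 0) (k, l) = (1 - p) ^ (-(i : ℤ)) * p⁻¹)
    ∧ (¬(i ≤ k ∧ j = 0) ∧ ¬(i = k ∧ 1 ≤ j ∧ j ≤ l) →
      hit (i, j) (k, l) / hit (0, 0) (k, l) = 0) := by
  set q : ℝ := 1 - p with hq
  have hq0 : 0 < q := by simp [hq]; linarith
  have hqne : q ≠ 0 := hq0.ne'
  -- states strictly above column k, or above row l, have hit 0 (for j ≥ 1 off-column)
  have upzero : ∀ n a b, 1 ≤ b → l + 1 ≤ b + n → a ≠ k → hit (a, b) (k, l) = 0 := by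
    intro n
    induction n with
    | zero =>
      intro a b hb hbn hak
      exact hzero _ _ (by simp only [not_and]; intro _; omega)
    | succ n ih =>
      intro a b hb hbn hak
      by_cases h : l + 1 ≤ b
      · exact hzero _ _ (by simp only [not_and]; intro _; omega)
      · obtain ⟨b', rfl⟩ : ∃ b', b = b' + 1 := ⟨b - 1, by omega⟩
        rw [hrecj a b' (k, l) (by simp [Prod.ext_iff]; intro h'; exact absurd h' hak)]
        exact ih a (b' + 2) (by omega) (by omega) hak
  have upone : ∀ n b, 1 ≤ b → l ≤ b + n → b ≤ l → hit (k, b) (k, l) = 1 := by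
    intro n
    induction n with
    | zero =>
      intro b hb hbn hbl
      have : b = l := by omega
      subst this; exact hself _
    | succ n ih =>
      intro b hb hbn hbl
      by_cases h : b = l
      · subst h; exact hself _
      · obtain ⟨b', rfl⟩ : ∃ b', b = b' + 1 := ⟨b - 1, by omega⟩
        rw [hrecj k b' (k, l) (by simp [Prod.ext_iff]; omega)]
        exact ih (b' + 2) (by omega) (by omega) (by omega)
  have hk0 : hit (k, 0) (k, l) = if l = 0 then 1 else p := by
    rcases Nat.eq_zero_or_pos l with hl | hl
    · subst hl; simp [hself]
    · rw [if_neg (by omega)]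
      rw [hrec0 k (k, l) (by simp [Prod.ext_iff]; omega)]
      rw [hzero (k + 1, 0) (k, l) (by simp only [not_and]; intro h; omega)]
      rw [upone l 1 le_rfl (by omega) hl]
      ring
  set c : ℝ := hit (k, 0) (k, l) with hc
  have hcpos : 0 < c := by
    rw [hk0]; split <;> [norm_num; exact hp0]
  have hdown : ∀ n a, a ≤ k → k ≤ a + n → hit (a, 0) (k, l) = q ^ (k - a) * c := by
    intro n
    induction n with
    | zero =>
      intro a ha hka
      have : a = k := by omega
      subst this; simp [hc]
    | succ n ih =>
      intro a ha hka
      by_cases h : a = k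
      · subst h; simp [hc]
      · have hak : a < k := by omega
        rw [hrec0 a (k, l) (by simp [Prod.ext_iff]; omega)]
        rw [upzero (l + 1) a 1 le_rfl (by omega) (by omega)]
        rw [ih (a + 1) (by omega) (by omega)]
        have : k - a = (k - (a + 1)) + 1 := by omega
        rw [this, pow_succ]
        ring
  have h00 : hit (0, 0) (k, l) = q ^ k * c := by
    simpa using hdown k 0 (by omega) (by omega)
  have h00pos : 0 < hit (0, 0) (k, l) := by
    rw [h00]; positivity
  refine ⟨?_, ?_, ?_⟩
  · rintro ⟨hik, rfl⟩
    rw [hdown k i hik (by omega), h00]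
    rw [mul_div_mul_right _ _ hcpos.ne']
    rw [← zpow_natCast q (k - i), ← zpow_natCast q k, ← zpow_sub₀ hqne]
    congr 1
    omega
  · rintro ⟨rfl, hj1, hjl⟩
    rw [upone l j hj1 (by omega) hjl, h00]
    have hcp : c = p := by rw [hk0, if_neg (by omega)]
    rw [hcp]
    rw [one_div, mul_inv, ← zpow_natCast q i, ← zpow_neg]
  · rintro ⟨h1, h2⟩
    rcases Nat.eq_zero_or_pos j with hj | hj
    · subst hj
      have : ¬ i ≤ k := fun h => h1 ⟨h, rfl⟩
      rw [hzero (i, 0) (k, l) (by simp only [not_and]; intro h; omega)]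
      simp
    · by_cases hik : i = k
      · subst hik
        have hjl : l < j := by
          by_contra h
          exact h2 ⟨rfl, hj, by omega⟩
        rw [hzero (i, j) (i, l) (by simp only [not_and]; intro _; omega)]
        simp
      · rw [upzero (l + 1) i j hj (by omega) hik]
        simp
end

section
/- For the q-binomial urn chain on ℕ₀×ℕ₀ with parameters 0 < q < 1, 0 < r < 1, the probability of hitting (k,ℓ) from (i,j) (i ≤ k, j ≤ ℓ) equals the q-binomial coefficient binom{(k−i)+(ℓ−j)}{k−i}_q times (r q^j)^{k−i} (1 − r q^j)(1 − r q^{j+1})⋯(1 − r q^{ℓ−1}). -/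
open Finset

/-- **Hitting probabilities of the q-binomial urn.**
The q-binomial urn with parameters `0 < q < 1`, `0 < r < 1` is the Markov chain on
`ℕ₀ × ℕ₀` with transitions `(i,j) → (i+1,j)` with probability `r qʲ` and
`(i,j) → (i,j+1)` with probability `1 − r qʲ`.  `hit x y` is the probability of ever
visiting `y` from `x`, characterized by `hit x x = 1`, vanishing on non-dominated
states, and the one-step recurrence.  Conclusion: for `i ≤ k`, `j ≤ ℓ`,
`hit (i,j) (k,ℓ)` equals the q-binomial coefficient `binom{(k−i)+(ℓ−j)}{k−i}_q`
times `(r qʲ)^{k−i} (1 − r qʲ)(1 − r q^{j+1})⋯(1 − r q^{ℓ−1})`. -/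
theorem q_binomial_urn_hitting_probability
    (q r : ℝ) (hq0 : 0 < q) (hq1 : q < 1) (hr0 : 0 < r) (hr1 : r < 1)
    (hit : ℕ × ℕ → ℕ × ℕ → ℝ)
    (hself : ∀ x, hit x x = 1)
    (hzero : ∀ x y, ¬(x.1 ≤ y.1 ∧ x.2 ≤ y.2) → hit x y = 0)
    (hrec : ∀ i j : ℕ, ∀ y : ℕ × ℕ, (i, j) ≠ y →
      hit (i, j) y = (r * q ^ j) * hit (i + 1, j) y + (1 - r * q ^ j) * hit (i, j + 1) y)
    (i j k l : ℕ) (hik : i ≤ k) (hjl : j ≤ l) :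
    hit (i, j) (k, l)
      = (∏ s ∈ Finset.Icc 1 ((k - i) + (l - j)), (1 - q ^ s))
          / ((∏ s ∈ Finset.Icc 1 (k - i), (1 - q ^ s))
              * (∏ s ∈ Finset.Icc 1 (l - j), (1 - q ^ s)))
        * ((r * q ^ j) ^ (k - i) * ∏ s ∈ Finset.Ico j l, (1 - r * q ^ s)) := by
  have hP : ∀ m : ℕ, 0 < ∏ s ∈ Finset.Icc 1 m, (1 - q ^ s) := by
    intro m
    apply Finset.prod_pos
    intro s hs
    have hs1 : 1 ≤ s := (Finset.mem_Icc.mp hs).1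
    have : q ^ s < 1 := pow_lt_one₀ hq0.le hq1 (by omega)
    linarith
  have key : ∀ N m n i0 j0 : ℕ, m + n = N →
      hit (i0, j0) (i0 + m, j0 + n)
        = (∏ s ∈ Finset.Icc 1 (m + n), (1 - q ^ s))
            / ((∏ s ∈ Finset.Icc 1 m, (1 - q ^ s)) * (∏ s ∈ Finset.Icc 1 n, (1 - q ^ s)))
          * ((r * q ^ j0) ^ m * ∏ s ∈ Finset.Ico j0 (j0 + n), (1 - r * q ^ s)) := by
    intro N
    induction N with
    | zero =>
      intro m n i0 j0 hmn
      obtain ⟨rfl, rfl⟩ : m = 0 ∧ n = 0 := by omega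
      simp [hself]
    | succ N ih =>
      intro m n i0 j0 hmn
      have hne : (i0, j0) ≠ (i0 + m, j0 + n) := by
        intro h
        rw [Prod.mk.injEq] at h
        omega
      rw [hrec i0 j0 _ hne]
      match m, n with
      | 0, 0 => omega
      | 0, n' + 1 =>
        have h1 : hit (i0 + 1, j0) (i0 + 0, j0 + (n' + 1)) = 0 := by
          apply hzero; simp
        have h2 := ih 0 n' i0 (j0 + 1) (by omega)
        rw [show j0 + 1 + n' = j0 + (n' + 1) by omega] at h2
        rw [h1, h2, Finset.prod_eq_prod_Ico_succ_bot (show j0 < j0 + (n' + 1) by omega)]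
        have e0 : (∏ s ∈ Finset.Icc 1 0, (1 - q ^ s)) = 1 := by simp
        rw [e0]
        have := (hP n').ne'
        have := (hP (n' + 1)).ne'
        field_simp
        try ring
      | m' + 1, 0 =>
        have h1 : hit (i0, j0 + 1) (i0 + (m' + 1), j0 + 0) = 0 := by
          apply hzero; simp
        have h2 := ih m' 0 (i0 + 1) j0 (by omega)
        rw [show i0 + 1 + m' = i0 + (m' + 1) by omega] at h2
        rw [h1, h2]
        have e0 : (∏ s ∈ Finset.Icc 1 0, (1 - q ^ s)) = 1 := by simp
        rw [e0]
        have := (hP m').ne'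
        have := (hP (m' + 1)).ne'
        simp
        field_simp
        ring
      | m' + 1, n' + 1 =>
        have h2 := ih m' (n' + 1) (i0 + 1) j0 (by omega)
        rw [show i0 + 1 + m' = i0 + (m' + 1) by omega] at h2
        have h3 := ih (m' + 1) n' i0 (j0 + 1) (by omega)
        rw [show j0 + 1 + n' = j0 + (n' + 1) by omega] at h3
        rw [h2, h3]
        -- rewrite products
        rw [Finset.prod_eq_prod_Ico_succ_bot (show j0 < j0 + (n' + 1) by omega)]
        rw [show m' + 1 + (n' + 1) = (m' + (n' + 1)) + 1 by omega,
            Finset.prod_Icc_succ_top (show 1 ≤ m' + (n' + 1) + 1 by omega),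
            show m' + 1 + n' = m' + (n' + 1) by omega,
            Finset.prod_Icc_succ_top (show 1 ≤ m' + 1 by omega) (fun s => (1 - q ^ s)),
            Finset.prod_Icc_succ_top (show 1 ≤ n' + 1 by omega) (fun s => (1 - q ^ s))]
        have hm := (hP m').ne'
        have hn := (hP n').ne'
        have hmn1 := (hP (m' + (n' + 1))).ne'
        have hqm : (1 : ℝ) - q ^ (m' + 1) ≠ 0 := by
          have : q ^ (m' + 1) < 1 := pow_lt_one₀ hq0.le hq1 (by omega)
          linarith
        have hqn : (1 : ℝ) - q ^ (n' + 1) ≠ 0 := by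
          have : q ^ (n' + 1) < 1 := pow_lt_one₀ hq0.le hq1 (by omega)
          linarith
        rw [show (r * q ^ (j0 + 1)) ^ (m' + 1)
              = (r * q ^ j0) ^ m' * (r * q ^ j0) * (q ^ (m' + 1)) by
            rw [show r * q ^ (j0 + 1) = r * q ^ j0 * q by ring, mul_pow]; ring,
          show (r * q ^ j0) ^ (m' + 1) = (r * q ^ j0) ^ m' * (r * q ^ j0) from pow_succ _ _,
          show m' + (n' + 1) + 1 = (m' + 1) + (n' + 1) by omega,
          show (q : ℝ) ^ ((m' + 1) + (n' + 1)) = q ^ (m' + 1) * q ^ (n' + 1) from pow_add q _ _]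
        set A := ∏ s ∈ Finset.Icc 1 m', (1 - q ^ s) with hA
        set B := ∏ s ∈ Finset.Icc 1 n', (1 - q ^ s) with hB
        set D := ∏ s ∈ Finset.Icc 1 (m' + (n' + 1)), (1 - q ^ s) with hD
        set E := ∏ s ∈ Finset.Ico (j0 + 1) (j0 + (n' + 1)), (1 - r * q ^ s) with hE
        set z := (r * q ^ j0) ^ m' with hz
        set w := r * q ^ j0 with hw
        set u := q ^ (m' + 1) with hu
        set v := q ^ (n' + 1) with hv
        clear_value A B D E z w u v
        clear hA hB hD hE hz hw hu hv h2 h3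
        field_simp
        ring
  have h := key ((k - i) + (l - j)) (k - i) (l - j) i j rfl
  rw [show i + (k - i) = k by omega, show j + (l - j) = l by omega] at h
  exact h
end

section
/- A Markov chain started at (0,0) with parameter 0 < q < 1, 0 < r < 1, with transitions (i,j)→(i+1,j) with probability rq^j and (i,j)→(i,j+1) with probability 1−rq^j, almost surely has eventually constant first coordinate: with probability one there exists N such that the first coordinate never changes after time N. -/
open MeasureTheory


/-- east step event at time `n`. -/
def qEast (n : ℕ) : Set (ℕ → ℕ × ℕ) := {ω | ω (n+1) = ((ω n).1 + 1, (ω n).2)}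
/-- north step event at time `n`. -/
def qNorth (n : ℕ) : Set (ℕ → ℕ × ℕ) := {ω | ω (n+1) = ((ω n).1, (ω n).2 + 1)}
/-- good paths: each step east or north -/
def qG : Set (ℕ → ℕ × ℕ) := {ω | ∀ n, ω ∈ qEast n ∨ ω ∈ qNorth n}
/-- some east step at level j -/
def qA (j : ℕ) : Set (ℕ → ℕ × ℕ) := {ω | ∃ n, (ω n).2 = j ∧ ω ∈ qEast n}
/-- all steps from N on are east at level j -/
def qF (j N : ℕ) : Set (ℕ → ℕ × ℕ) := {ω | ∀ n, N ≤ n → (ω n).2 = j ∧ ω ∈ qEast n}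
/-- first m steps from N are east at level j -/
def qFm (j N m : ℕ) : Set (ℕ → ℕ × ℕ) := {ω | ∀ k < m, (ω (N+k)).2 = j ∧ ω ∈ qEast (N+k)}
/-- cylinder -/
def qcyl (s : ℕ → ℕ × ℕ) (n : ℕ) : Set (ℕ → ℕ × ℕ) := {ω | ∀ m ≤ n, ω m = s m}

lemma qmeas_pair (a b : ℕ) (R : ℕ × ℕ → ℕ × ℕ → Prop) :
    MeasurableSet {ω : ℕ → ℕ × ℕ | R (ω a) (ω b)} := by
  have h : {ω : ℕ → ℕ × ℕ | R (ω a) (ω b)}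
      = (fun ω : ℕ → ℕ × ℕ => (ω a, ω b)) ⁻¹' {p | R p.1 p.2} := rfl
  rw [h]
  exact ((measurable_pi_apply a).prodMk (measurable_pi_apply b))
    (Set.to_countable _).measurableSet

lemma qmeas_one (a : ℕ) (R : ℕ × ℕ → Prop) :
    MeasurableSet {ω : ℕ → ℕ × ℕ | R (ω a)} :=
  (measurable_pi_apply a) (Set.to_countable _).measurableSet

lemma qEast_meas (n : ℕ) : MeasurableSet (qEast n) :=
  qmeas_pair (n+1) n (fun p q => p = (q.1 + 1, q.2))

lemma qNorth_meas (n : ℕ) : MeasurableSet (qNorth n) :=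
  qmeas_pair (n+1) n (fun p q => p = (q.1, q.2 + 1))

lemma qG_meas : MeasurableSet qG := by
  have : qG = ⋂ n, (qEast n ∪ qNorth n) := Set.ext fun ω => by
    simp only [Set.mem_iInter, Set.mem_union]; rfl
  rw [this]
  exact MeasurableSet.iInter fun n => (qEast_meas n).union (qNorth_meas n)

lemma qA_meas (j : ℕ) : MeasurableSet (qA j) := by
  have : qA j = ⋃ n, ({ω : ℕ → ℕ × ℕ | (ω n).2 = j} ∩ qEast n) := Set.ext fun ω => by
    simp only [Set.mem_iUnion, Set.mem_inter_iff, Set.mem_setOf_eq]; rfl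
  rw [this]
  exact MeasurableSet.iUnion fun n =>
    (qmeas_one n (fun p => p.2 = j)).inter (qEast_meas n)

lemma qF_meas (j N : ℕ) : MeasurableSet (qF j N) := by
  have : qF j N = ⋂ n, ⋂ (_ : N ≤ n), ({ω : ℕ → ℕ × ℕ | (ω n).2 = j} ∩ qEast n) := Set.ext fun ω => by
    simp only [Set.mem_iInter, Set.mem_inter_iff, Set.mem_setOf_eq]; rfl
  rw [this]
  exact MeasurableSet.iInter fun n => MeasurableSet.iInter fun _ =>
    (qmeas_one n (fun p => p.2 = j)).inter (qEast_meas n)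

lemma qcyl_meas (s : ℕ → ℕ × ℕ) (n : ℕ) : MeasurableSet (qcyl s n) := by
  have : qcyl s n = ⋂ m, ⋂ (_ : m ≤ n), {ω : ℕ → ℕ × ℕ | ω m = s m} := Set.ext fun ω => by
    simp only [Set.mem_iInter, Set.mem_setOf_eq]; rfl
  rw [this]
  exact MeasurableSet.iInter fun m => MeasurableSet.iInter fun _ =>
    qmeas_one m (fun p => p = s m)

def qtrunc (n : ℕ) (s : ℕ → ℕ × ℕ) : ℕ → ℕ × ℕ := fun m => if m ≤ n then s m else (0, 0)

lemma qtrunc_countable (n : ℕ) (P : Set (ℕ → ℕ × ℕ)) : (qtrunc n '' P).Countable := by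
  classical
  have h : qtrunc n '' P ⊆ Set.range (fun (v : Fin (n+1) → ℕ × ℕ) (m : ℕ) =>
      if h : m ≤ n then v ⟨m, Nat.lt_succ_of_le h⟩ else (0, 0)) := by
    rintro t ⟨s, _, rfl⟩
    refine ⟨fun i => s i, funext fun m => ?_⟩
    by_cases h : m ≤ n <;> simp [qtrunc, h]
  exact (Set.countable_range _).mono h

lemma qtrunc_eq_of (n : ℕ) {t t' : ℕ → ℕ × ℕ} (ht : ∃ s, qtrunc n s = t)
    (ht' : ∃ s, qtrunc n s = t') (h : ∀ m ≤ n, t m = t' m) : t = t' := by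
  obtain ⟨s, rfl⟩ := ht; obtain ⟨s', rfl⟩ := ht'
  funext m
  by_cases hm : m ≤ n
  · exact h m hm
  · simp [qtrunc, hm]

lemma qcyl_disjoint (n : ℕ) (P : Set (ℕ → ℕ × ℕ)) :
    (qtrunc n '' P).PairwiseDisjoint (fun t => qcyl t n) := by
  intro t ht t' ht' hne
  refine Set.disjoint_left.2 fun ω hω hω' => hne ?_
  refine qtrunc_eq_of n ⟨_, ht.choose_spec.2⟩ ⟨_, ht'.choose_spec.2⟩ fun m hm => ?_
  rw [← hω m hm, ← hω' m hm]

lemma qdecomp (n : ℕ) (P : Set (ℕ → ℕ × ℕ))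
    (hdet : ∀ ω ω', (∀ m ≤ n, ω m = ω' m) → ω ∈ P → ω' ∈ P) :
    P = ⋃ t ∈ qtrunc n '' P, qcyl t n := by
  ext ω
  constructor
  · intro hω
    refine Set.mem_biUnion ⟨ω, hω, rfl⟩ fun m hm => ?_
    simp [qtrunc, hm]
  · rintro hω
    obtain ⟨t, ⟨s, hs, rfl⟩, hωt⟩ := Set.mem_iUnion₂.1 hω
    refine hdet s ω (fun m hm => ?_) hs
    rw [hωt m hm]; simp [qtrunc, hm]

lemma qcyl_inter_east (t : ℕ → ℕ × ℕ) (n : ℕ) :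
    qcyl t n ∩ qEast n
      = {ω | (∀ m ≤ n, ω m = t m) ∧ ω (n + 1) = ((t n).1 + 1, (t n).2)} := by
  ext ω
  constructor
  · rintro ⟨h1, h2⟩
    exact ⟨h1, by rw [show ω (n+1) = _ from h2, h1 n le_rfl]⟩
  · rintro ⟨h1, h2⟩
    exact ⟨h1, by show ω (n+1) = _; rw [h2, h1 n le_rfl]⟩

lemma qcyl_inter_north (t : ℕ → ℕ × ℕ) (n : ℕ) :
    qcyl t n ∩ qNorth n
      = {ω | (∀ m ≤ n, ω m = t m) ∧ ω (n + 1) = ((t n).1, (t n).2 + 1)} := by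
  ext ω
  constructor
  · rintro ⟨h1, h2⟩
    exact ⟨h1, by rw [show ω (n+1) = _ from h2, h1 n le_rfl]⟩
  · rintro ⟨h1, h2⟩
    exact ⟨h1, by show ω (n+1) = _; rw [h2, h1 n le_rfl]⟩

section

variable {q r : ℝ} {μ : Measure (ℕ → ℕ × ℕ)} [IsProbabilityMeasure μ]

lemma qstep_east
    (heast : ∀ n : ℕ, ∀ s : ℕ → ℕ × ℕ,
      μ {ω | (∀ m ≤ n, ω m = s m) ∧ ω (n + 1) = ((s n).1 + 1, (s n).2)}
        = ENNReal.ofReal (r * q ^ (s n).2) * μ {ω | ∀ m ≤ n, ω m = s m})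
    (n j : ℕ) (P : Set (ℕ → ℕ × ℕ))
    (hdet : ∀ ω ω', (∀ m ≤ n, ω m = ω' m) → ω ∈ P → ω' ∈ P)
    (hlev : ∀ ω ∈ P, (ω n).2 = j) :
    μ (P ∩ qEast n) = ENNReal.ofReal (r * q ^ j) * μ P := by
  have hcnt := qtrunc_countable n P
  have hdisj := qcyl_disjoint n P
  have hP := qdecomp n P hdet
  have hlevt : ∀ t ∈ qtrunc n '' P, (t n).2 = j := by
    rintro t ⟨s, hs, rfl⟩
    simpa [qtrunc] using hlev s hs
  have hterm : ∀ t ∈ qtrunc n '' P,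
      μ (qcyl t n ∩ qEast n) = ENNReal.ofReal (r * q ^ j) * μ (qcyl t n) := by
    intro t ht
    rw [qcyl_inter_east, show (μ {ω | (∀ m ≤ n, ω m = t m)
        ∧ ω (n + 1) = ((t n).1 + 1, (t n).2)}) = _ from heast n t, hlevt t ht]
    rfl
  have hPE : P ∩ qEast n = ⋃ t ∈ qtrunc n '' P, (qcyl t n ∩ qEast n) := by
    conv_lhs => rw [hP]
    simp [Set.iUnion_inter]
  rw [hPE, measure_biUnion hcnt (hdisj.mono_on fun t _ => Set.inter_subset_left)
    (fun t _ => (qcyl_meas t n).inter (qEast_meas n))]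
  rw [tsum_congr (fun t : ↥(qtrunc n '' P) => hterm t t.2), ENNReal.tsum_mul_left]
  congr 1
  rw [← measure_biUnion hcnt hdisj (fun t _ => qcyl_meas t n), ← hP]

end
section

variable {q r : ℝ} {μ : Measure (ℕ → ℕ × ℕ)} [IsProbabilityMeasure μ]

lemma qG_null (hq0 : 0 < q) (hq1 : q < 1) (hr0 : 0 < r) (hr1 : r < 1)
    (heast : ∀ n : ℕ, ∀ s : ℕ → ℕ × ℕ,
      μ {ω | (∀ m ≤ n, ω m = s m) ∧ ω (n + 1) = ((s n).1 + 1, (s n).2)}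
        = ENNReal.ofReal (r * q ^ (s n).2) * μ {ω | ∀ m ≤ n, ω m = s m})
    (hnorth : ∀ n : ℕ, ∀ s : ℕ → ℕ × ℕ,
      μ {ω | (∀ m ≤ n, ω m = s m) ∧ ω (n + 1) = ((s n).1, (s n).2 + 1)}
        = ENNReal.ofReal (1 - r * q ^ (s n).2) * μ {ω | ∀ m ≤ n, ω m = s m}) :
    μ qGᶜ = 0 := by
  have hGc : qGᶜ = ⋃ n, (qEast n ∪ qNorth n)ᶜ := by
    ext ω
    simp only [Set.mem_compl_iff, Set.mem_iUnion, Set.mem_union]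
    rw [qG, Set.mem_setOf_eq, not_forall]
  rw [hGc]
  refine measure_iUnion_null fun n => ?_
  have hcover : (qEast n ∪ qNorth n)ᶜ
      ⊆ ⋃ t ∈ qtrunc n '' (Set.univ), (qcyl t n ∩ (qEast n ∪ qNorth n)ᶜ) := by
    intro ω hω
    refine Set.mem_biUnion ⟨ω, trivial, rfl⟩ ⟨fun m hm => ?_, hω⟩
    simp [qtrunc, hm]
  refine measure_mono_null hcover ?_
  rw [measure_biUnion_null_iff (qtrunc_countable n _)]
  intro t _
  set a := r * q ^ (t n).2 with ha
  have ha0 : 0 ≤ a := by positivity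
  have ha1 : a ≤ 1 := by
    have : q ^ (t n).2 ≤ 1 := pow_le_one₀ hq0.le hq1.le
    nlinarith
  have hdisjEN : Disjoint (qcyl t n ∩ qEast n) (qcyl t n ∩ qNorth n) := by
    refine Set.disjoint_left.2 ?_
    rintro ω ⟨h1, h2⟩ ⟨h3, h4⟩
    have := (show ω (n+1) = _ from h2).symm.trans (show ω (n+1) = _ from h4)
    have h5 := congrArg Prod.fst this
    simp at h5
  have hEN : μ ((qcyl t n ∩ qEast n) ∪ (qcyl t n ∩ qNorth n)) = μ (qcyl t n) := by
    rw [measure_union hdisjEN ((qcyl_meas t n).inter (qNorth_meas n)),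
      qcyl_inter_east, qcyl_inter_north, heast n t, hnorth n t,
      ← add_mul, ← ENNReal.ofReal_add ha0 (by linarith)]
    norm_num
    rw [show a + (1 - r * q ^ (t n).2) = 1 by rw [ha]; ring, ENNReal.ofReal_one, one_mul]; rfl
  have hsub2 : (qcyl t n ∩ qEast n) ∪ (qcyl t n ∩ qNorth n) ⊆ qcyl t n := by
    rintro ω (⟨h1, _⟩ | ⟨h1, _⟩) <;> exact h1
  have hdiff : μ (qcyl t n \ ((qcyl t n ∩ qEast n) ∪ (qcyl t n ∩ qNorth n))) = 0 := by
    rw [measure_diff hsub2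
      (((qcyl_meas t n).inter (qEast_meas n)).union
        ((qcyl_meas t n).inter (qNorth_meas n))).nullMeasurableSet
      (measure_ne_top μ _), hEN, tsub_self]
  refine measure_mono_null ?_ hdiff
  rintro ω ⟨h1, h2⟩
  refine ⟨h1, ?_⟩
  rintro (⟨_, h3⟩ | ⟨_, h3⟩) <;> exact h2 (by simp [h3])

lemma qlev_mono {ω : ℕ → ℕ × ℕ} (hω : ω ∈ qG) : Monotone fun n => (ω n).2 :=
  monotone_nat_of_le_succ fun n => by
    show (ω n).2 ≤ (ω (n+1)).2
    rcases hω n with h | h <;> rw [show ω (n+1) = _ from h] <;> simp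

/-- the "no east step at level j before time n, at level j at time n" events -/
def qC (j n : ℕ) : Set (ℕ → ℕ × ℕ) :=
  {ω | (ω n).2 = j ∧ ∀ m < n, ¬((ω m).2 = j ∧ ω ∈ qEast m)}

lemma qA_bound (hq0 : 0 < q) (hq1 : q < 1) (hr0 : 0 < r) (hr1 : r < 1)
    (heast : ∀ n : ℕ, ∀ s : ℕ → ℕ × ℕ,
      μ {ω | (∀ m ≤ n, ω m = s m) ∧ ω (n + 1) = ((s n).1 + 1, (s n).2)}
        = ENNReal.ofReal (r * q ^ (s n).2) * μ {ω | ∀ m ≤ n, ω m = s m})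
    (hnorth : ∀ n : ℕ, ∀ s : ℕ → ℕ × ℕ,
      μ {ω | (∀ m ≤ n, ω m = s m) ∧ ω (n + 1) = ((s n).1, (s n).2 + 1)}
        = ENNReal.ofReal (1 - r * q ^ (s n).2) * μ {ω | ∀ m ≤ n, ω m = s m})
    (j : ℕ) :
    μ (qA j) ≤ ENNReal.ofReal (r * q ^ j) := by
  classical
  have hCmeas : ∀ n, MeasurableSet (qC j n) := by
    intro n
    have : qC j n = {ω : ℕ → ℕ × ℕ | (ω n).2 = j}
        ∩ ⋂ m, ⋂ (_ : m < n), ({ω : ℕ → ℕ × ℕ | (ω m).2 = j} ∩ qEast m)ᶜ := by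
      ext ω
      simp only [qC, Set.mem_inter_iff, Set.mem_setOf_eq, Set.mem_iInter,
        Set.mem_compl_iff]
    rw [this]
    exact (qmeas_one n (fun p => p.2 = j)).inter
      (MeasurableSet.iInter fun m => MeasurableSet.iInter fun _ =>
        ((qmeas_one m (fun p => p.2 = j)).inter (qEast_meas m)).compl)
  have hsub : qA j ⊆ ⋃ n, (qC j n ∩ qEast n) := by
    intro ω hω
    have hex : ∃ n, (ω n).2 = j ∧ ω ∈ qEast n := hω
    let n₀ := Nat.find hex
    have hn₀ := Nat.find_spec hex
    refine Set.mem_iUnion.2 ⟨n₀, ⟨hn₀.1, fun m hm => Nat.find_min hex hm⟩, hn₀.2⟩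
  have hterm : ∀ n, μ (qC j n ∩ qEast n) = ENNReal.ofReal (r * q ^ j) * μ (qC j n) := by
    intro n
    refine qstep_east heast n j (qC j n) ?_ (fun ω hω => hω.1)
    rintro ω ω' hmm ⟨h1, h2⟩
    refine ⟨by rw [← hmm n le_rfl]; exact h1, fun m hm hcon => ?_⟩
    refine h2 m hm ⟨by rw [hmm m hm.le]; exact hcon.1, ?_⟩
    show ω (m+1) = _
    rw [hmm (m+1) hm, hmm m hm.le]
    exact hcon.2
  -- disjointness of qC j n ∩ qG over n
  have hdisjC : Pairwise (Function.onFun Disjoint fun n => qC j n ∩ qG) := by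
    have key : ∀ {n n'}, n < n' →
        ∀ ω, ω ∈ qC j n ∩ qG → ω ∈ qC j n' ∩ qG → False := by
      rintro n n' hlt ω ⟨⟨hl, _⟩, hG⟩ ⟨⟨hl', hno'⟩, _⟩
      refine hno' n hlt ⟨hl, ?_⟩
      rcases hG n with h | h
      · exact h
      · exfalso
        have h1 : (ω (n+1)).2 = j + 1 := by rw [show ω (n+1) = _ from h, hl]
        have h2 : (ω (n+1)).2 ≤ (ω n').2 := qlev_mono hG hlt
        omega
    intro n n' hne
    refine Set.disjoint_left.2 fun ω h1 h2 => ?_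
    rcases hne.lt_or_gt with h | h
    · exact key h ω h1 h2
    · exact key h ω h2 h1
  have hGnull := qG_null hq0 hq1 hr0 hr1 heast hnorth
  have hCG : ∀ n, μ (qC j n) = μ (qC j n ∩ qG) := by
    intro n
    refine le_antisymm ?_ (measure_mono Set.inter_subset_left)
    calc μ (qC j n) ≤ μ ((qC j n ∩ qG) ∪ qGᶜ) := by
          refine measure_mono fun ω hω => ?_
          by_cases hG : ω ∈ qG
          · exact Or.inl ⟨hω, hG⟩
          · exact Or.inr hG
      _ ≤ μ (qC j n ∩ qG) + μ qGᶜ := measure_union_le _ _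
      _ = μ (qC j n ∩ qG) := by rw [hGnull, add_zero]
  have hsum : ∑' n, μ (qC j n) ≤ 1 := by
    calc ∑' n, μ (qC j n) = ∑' n, μ (qC j n ∩ qG) := tsum_congr fun n => hCG n
      _ = μ (⋃ n, qC j n ∩ qG) :=
          (measure_iUnion hdisjC fun n => (hCmeas n).inter qG_meas).symm
      _ ≤ 1 := prob_le_one
  calc μ (qA j) ≤ ∑' n, μ (qC j n ∩ qEast n) :=
        (measure_mono hsub).trans (measure_iUnion_le _)
    _ = ENNReal.ofReal (r * q ^ j) * ∑' n, μ (qC j n) := by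
        rw [← ENNReal.tsum_mul_left]
        exact tsum_congr hterm
    _ ≤ ENNReal.ofReal (r * q ^ j) * 1 := mul_le_mul_right hsum _
    _ = _ := mul_one _

end
section

variable {q r : ℝ} {μ : Measure (ℕ → ℕ × ℕ)} [IsProbabilityMeasure μ]

lemma qF_null (hq0 : 0 < q) (hq1 : q < 1) (hr0 : 0 < r) (hr1 : r < 1)
    (heast : ∀ n : ℕ, ∀ s : ℕ → ℕ × ℕ,
      μ {ω | (∀ m ≤ n, ω m = s m) ∧ ω (n + 1) = ((s n).1 + 1, (s n).2)}
        = ENNReal.ofReal (r * q ^ (s n).2) * μ {ω | ∀ m ≤ n, ω m = s m})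
    (j N : ℕ) : μ (qF j N) = 0 := by
  set x := ENNReal.ofReal (r * q ^ j) with hx
  have key : ∀ m, μ (qFm j N m) ≤ x ^ m := by
    intro m
    induction m with
    | zero =>
      simp only [pow_zero]
      have : qFm j N 0 = Set.univ := by
        ext ω; simp [qFm]
      rw [this, measure_univ]
    | succ m ih =>
      set P := qFm j N m ∩ {ω : ℕ → ℕ × ℕ | (ω (N + m)).2 = j} with hP
      have hsplit : qFm j N (m+1) = P ∩ qEast (N + m) := by
        ext ω
        constructor
        · intro h
          exact ⟨⟨fun k hk => h k (by omega), (h m (by omega)).1⟩, (h m (by omega)).2⟩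
        · rintro ⟨⟨h1, h2⟩, h3⟩ k hk
          rcases Nat.lt_or_ge k m with hkm | hkm
          · exact h1 k hkm
          · have : k = m := by omega
            subst this
            exact ⟨h2, h3⟩
      have hstep : μ (P ∩ qEast (N + m)) = x * μ P := by
        refine qstep_east heast (N + m) j P ?_ (fun ω hω => hω.2)
        rintro ω ω' hmm ⟨h1, h2⟩
        constructor
        · intro k hk
          have e1 : ω' (N + k) = ω (N + k) := (hmm (N + k) (by omega)).symm
          have e2 : ω' (N + k + 1) = ω (N + k + 1) := (hmm (N + k + 1) (by omega)).symm
          refine ⟨by rw [e1]; exact (h1 k hk).1, ?_⟩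
          show ω' (N + k + 1) = _
          rw [e1, e2]
          exact (h1 k hk).2
        · show (ω' (N + m)).2 = j
          rw [← hmm (N + m) le_rfl]
          exact h2
      calc μ (qFm j N (m+1)) = x * μ P := by rw [hsplit, hstep]
        _ ≤ x * μ (qFm j N m) := mul_le_mul_right (measure_mono Set.inter_subset_left) x
        _ ≤ x * x ^ m := mul_le_mul_right ih x
        _ = x ^ (m+1) := (pow_succ' x m).symm
  have hsubm : ∀ m, qF j N ⊆ qFm j N m := by
    intro m ω hω k _
    exact hω (N + k) (by omega)
  have hx1 : x < 1 := by
    rw [hx]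
    refine ENNReal.ofReal_lt_one.2 ?_
    have hle : q ^ j ≤ 1 := pow_le_one₀ hq0.le hq1.le
    nlinarith
  have hlim : Filter.Tendsto (fun m => x ^ m) Filter.atTop (nhds 0) :=
    ENNReal.tendsto_pow_atTop_nhds_zero_of_lt_one hx1
  have : μ (qF j N) ≤ 0 :=
    ge_of_tendsto' hlim fun m => (measure_mono (hsubm m)).trans (key m)
  exact le_antisymm this (zero_le)

lemma qA_tsum_ne_top (hq0 : 0 < q) (hq1 : q < 1) (hr0 : 0 < r) (hr1 : r < 1)
    (heast : ∀ n : ℕ, ∀ s : ℕ → ℕ × ℕ,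
      μ {ω | (∀ m ≤ n, ω m = s m) ∧ ω (n + 1) = ((s n).1 + 1, (s n).2)}
        = ENNReal.ofReal (r * q ^ (s n).2) * μ {ω | ∀ m ≤ n, ω m = s m})
    (hnorth : ∀ n : ℕ, ∀ s : ℕ → ℕ × ℕ,
      μ {ω | (∀ m ≤ n, ω m = s m) ∧ ω (n + 1) = ((s n).1, (s n).2 + 1)}
        = ENNReal.ofReal (1 - r * q ^ (s n).2) * μ {ω | ∀ m ≤ n, ω m = s m}) :
    ∑' j, μ (qA j) ≠ ⊤ := by
  have hb : ∀ j, μ (qA j) ≤ ENNReal.ofReal r * ENNReal.ofReal q ^ j := by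
    intro j
    calc μ (qA j) ≤ ENNReal.ofReal (r * q ^ j) :=
          qA_bound hq0 hq1 hr0 hr1 heast hnorth j
      _ = ENNReal.ofReal r * ENNReal.ofReal q ^ j := by
          rw [ENNReal.ofReal_mul hr0.le, ENNReal.ofReal_pow hq0.le]
  have hsum : ∑' j, μ (qA j) ≤ ENNReal.ofReal r * (1 - ENNReal.ofReal q)⁻¹ := by
    calc ∑' j, μ (qA j) ≤ ∑' j, ENNReal.ofReal r * ENNReal.ofReal q ^ j :=
          ENNReal.tsum_le_tsum hb
      _ = ENNReal.ofReal r * ∑' j, ENNReal.ofReal q ^ j := ENNReal.tsum_mul_left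
      _ = ENNReal.ofReal r * (1 - ENNReal.ofReal q)⁻¹ := by
          rw [ENNReal.tsum_geometric]
  refine ne_top_of_le_ne_top ?_ hsum
  refine ENNReal.mul_ne_top ENNReal.ofReal_ne_top ?_
  rw [ENNReal.inv_ne_top]
  intro h0
  rw [tsub_eq_zero_iff_le] at h0
  exact absurd (lt_of_lt_of_le (ENNReal.ofReal_lt_one.2 hq1) h0) (lt_irrefl _)

end

/-- **Eventual constancy of the first coordinate of the q-binomial urn.**
Let `μ` be the law on path space `(ℕ → ℕ₀ × ℕ₀)` of a Markov chain started at `(0,0)`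
which, from a state `(i,j)`, moves to `(i+1,j)` with probability `r qʲ` and to
`(i,j+1)` with probability `1 − r qʲ` (so with `μ`-probability one only these two
moves occur).  Then, almost surely, the first coordinate is eventually constant:
with probability one there is an `N` such that the first coordinate never changes
after time `N`. -/
theorem q_binomial_urn_first_coordinate_eventually_constant
    (q r : ℝ) (hq0 : 0 < q) (hq1 : q < 1) (hr0 : 0 < r) (hr1 : r < 1)
    (μ : Measure (ℕ → ℕ × ℕ)) [IsProbabilityMeasure μ]
    (h0 : μ {ω | ω 0 = (0, 0)} = 1)
    (heast : ∀ n : ℕ, ∀ s : ℕ → ℕ × ℕ,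
      μ {ω | (∀ m ≤ n, ω m = s m) ∧ ω (n + 1) = ((s n).1 + 1, (s n).2)}
        = ENNReal.ofReal (r * q ^ (s n).2) * μ {ω | ∀ m ≤ n, ω m = s m})
    (hnorth : ∀ n : ℕ, ∀ s : ℕ → ℕ × ℕ,
      μ {ω | (∀ m ≤ n, ω m = s m) ∧ ω (n + 1) = ((s n).1, (s n).2 + 1)}
        = ENNReal.ofReal (1 - r * q ^ (s n).2) * μ {ω | ∀ m ≤ n, ω m = s m}) :
    μ {ω | ∃ N : ℕ, ∀ n, N ≤ n → (ω n).1 = (ω N).1} = 1 := by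
  have hGoalMeas : MeasurableSet {ω : ℕ → ℕ × ℕ | ∃ N : ℕ, ∀ n, N ≤ n → (ω n).1 = (ω N).1} := by
    have : {ω : ℕ → ℕ × ℕ | ∃ N : ℕ, ∀ n, N ≤ n → (ω n).1 = (ω N).1}
        = ⋃ N, ⋂ n, ⋂ (_ : N ≤ n), {ω : ℕ → ℕ × ℕ | (ω n).1 = (ω N).1} := by
      ext ω
      simp only [Set.mem_iUnion, Set.mem_iInter, Set.mem_setOf_eq]
    rw [this]
    exact MeasurableSet.iUnion fun N => MeasurableSet.iInter fun n =>
      MeasurableSet.iInter fun _ => qmeas_pair n N (fun p p' => p.1 = p'.1)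
  rw [← prob_compl_eq_zero_iff hGoalMeas]
  have hNull : μ (qGᶜ ∪ (Filter.atTop.limsup qA ∪ ⋃ j, ⋃ N, qF j N)) = 0 := by
    refine measure_union_null (qG_null hq0 hq1 hr0 hr1 heast hnorth)
      (measure_union_null ?_ ?_)
    · exact measure_limsup_atTop_eq_zero (qA_tsum_ne_top hq0 hq1 hr0 hr1 heast hnorth)
    · exact measure_iUnion_null fun j => measure_iUnion_null fun N =>
        qF_null hq0 hq1 hr0 hr1 heast j N
  refine measure_mono_null (fun ω hω => ?_) hNull
  rw [Set.mem_compl_iff, Set.mem_setOf_eq] at hω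
  by_contra hbad
  simp only [Set.mem_union, Set.mem_compl_iff, Set.mem_iUnion, not_or, not_not,
    not_exists] at hbad
  obtain ⟨hG, hA, hF⟩ := hbad
  have hlev := qlev_mono hG
  have hA' : ∃ J : ℕ, ∀ j, J ≤ j → ω ∉ qA j := by
    rw [Filter.mem_limsup_iff_frequently_mem, Filter.frequently_atTop] at hA
    push_neg at hA
    obtain ⟨J, hJ⟩ := hA
    exact ⟨J, fun j hj => hJ j hj⟩
  obtain ⟨J, hJ⟩ := hA'
  by_cases hbdd : ∃ B, ∀ n, (ω n).2 ≤ B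
  · -- bounded level: eventually all east, contradicting hF
    obtain ⟨B, hB⟩ := hbdd
    have hBdd : BddAbove (Set.range fun n => (ω n).2) := ⟨B, by rintro _ ⟨n, rfl⟩; exact hB n⟩
    have hne : (Set.range fun n => (ω n).2).Nonempty := ⟨(ω 0).2, ⟨0, rfl⟩⟩
    obtain ⟨N, hN⟩ := Nat.sSup_mem hne hBdd
    have hN' : (ω N).2 = sSup (Set.range fun n => (ω n).2) := hN
    have hup : ∀ n, (ω n).2 ≤ (ω N).2 := by
      intro n
      rw [hN']
      exact le_csSup hBdd ⟨n, rfl⟩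
    have hconst : ∀ n, N ≤ n → (ω n).2 = (ω N).2 := fun n hn =>
      le_antisymm (hup n) (hlev hn)
    refine hF (ω N).2 N fun n hn => ⟨hconst n hn, ?_⟩
    rcases hG n with h | h
    · exact h
    · exfalso
      have h1 : (ω (n+1)).2 = (ω n).2 + 1 := by rw [show ω (n+1) = _ from h]
      have h2 := hconst (n+1) (by omega)
      have h3 := hconst n hn
      omega
  · -- unbounded level: eventually no east step, so first coordinate constant
    push_neg at hbdd
    obtain ⟨N, hN⟩ := hbdd J
    have hnorth' : ∀ n, N ≤ n → (ω (n+1)).1 = (ω n).1 := by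
      intro n hn
      rcases hG n with h | h
      · exfalso
        exact hJ (ω n).2 (le_of_lt (lt_of_lt_of_le hN (hlev hn))) ⟨n, rfl, h⟩
      · rw [show ω (n+1) = _ from h]
    refine hω ⟨N, fun n hn => ?_⟩
    induction n, hn using Nat.le_induction with
    | base => rfl
    | succ n hn ih => rw [hnorth' n hn, ih]
end
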